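/- arXiv:1805.09549 — 9 statements merged into one kernel-verified Lean document; each statement's English description precedes it below -/
import Mathlib

section
/- Suppose ξ = 0 and ζ λ > 0, and assume ρ ≥ 0. Then the approximated outage probability satisfies ∫_0^∞ W(z) f(z) dz = β(ϑ − ρ)/√(2π) + (α β / (2 √(2π) (ζλ)^{α/2})) [Γ(α/2, ζλ ϑ^{2/α}) − Γ(α/2, ζλ ρ^{2/α})], where Γ(s, x) = ∫_x^∞ t^{s−1} e^{−t} dt is the upper incomplete gamma function. (Proposition 2, the interference-limited dynamic spectrum access outage probability.) -/
open MeasureTheory Set Real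

/-- Proposition 2: the interference-limited (`ξ = 0`) dynamic spectrum access
approximated outage probability, expressed via the upper incomplete gamma
function `Γ(s,x) = ∫_x^∞ t^(s-1) e^(−t) dt`. -/
theorem stmt_1
    (α ζ lam ξ : ℝ) (hα : 2 < α) (hζ : 0 ≤ ζ) (hlam : 0 ≤ lam)
    (hξ : ξ = 0) (hζlam : 0 < ζ * lam)
    (f : ℝ → ℝ)
    (hf : ∀ z > (0:ℝ), f z = (2 * ζ * lam / α * z ^ (2/α - 1) + ξ) *
      Real.exp (-(ζ * lam * z ^ (2/α)) - ξ * z))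
    (n R θ β ϑ ρ : ℝ) (hn : 0 < n) (hR : 0 < R)
    (hθ : θ = 2 ^ R - 1)
    (hβ : β = Real.sqrt (n / (2 * Real.pi)) * (2 ^ (2 * R) - 1) ^ (-(1:ℝ)/2))
    (hϑ : ϑ = θ + Real.sqrt (Real.pi / 2) / β)
    (hρ : ρ = θ - Real.sqrt (Real.pi / 2) / β)
    (hρ0 : 0 ≤ ρ)
    (W : ℝ → ℝ)
    (hW : ∀ t, W t = if t ≤ ρ then 1
      else if t < ϑ then 1/2 - β / Real.sqrt (2 * Real.pi) * (t - θ) else 0)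
    (Ginc : ℝ → ℝ → ℝ)
    (hG : ∀ s x, Ginc s x = ∫ t in Set.Ioi x, t ^ (s - 1) * Real.exp (-t)) :
    ∫ z in Set.Ioi (0:ℝ), W z * f z =
      β * (ϑ - ρ) / Real.sqrt (2 * Real.pi)
        + α * β / ((ζ * lam) ^ (α/2) * 2 * Real.sqrt (2 * Real.pi)) *
          (Ginc (α/2) (ζ * lam * ϑ ^ (2/α)) - Ginc (α/2) (ζ * lam * ρ ^ (2/α))) := by
  have hα0 : (0:ℝ) < α := by linarith
  set c : ℝ := ζ * lam with hc
  have hc0 : 0 < c := hζlam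
  have hp0 : (0:ℝ) < 2/α := by positivity
  have hp1 : 2/α < 1 := by
    rw [div_lt_one hα0]; linarith
  -- basic positivity of β
  have h2π : (0:ℝ) < 2 * Real.pi := by positivity
  have hβ0 : 0 < β := by
    rw [hβ]
    have h1 : (0:ℝ) < Real.sqrt (n / (2 * Real.pi)) := Real.sqrt_pos.mpr (by positivity)
    have h2 : (1:ℝ) < (2:ℝ) ^ (2 * R) := by
      have := Real.rpow_lt_rpow_left_iff (x := (2:ℝ)) (y := 0) (z := 2*R) one_lt_two
      rw [Real.rpow_zero] at this
      exact this.mpr (by positivity)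
    have h3 : (0:ℝ) < (2:ℝ) ^ (2 * R) - 1 := by linarith
    positivity
  have hδ0 : 0 < Real.sqrt (Real.pi / 2) / β := by
    have : (0:ℝ) < Real.sqrt (Real.pi / 2) := Real.sqrt_pos.mpr (by positivity)
    positivity
  have hρϑ : ρ < ϑ := by rw [hρ, hϑ]; linarith
  have hϑ0 : 0 < ϑ := lt_of_le_of_lt hρ0 hρϑ
  have hsqrt2π : Real.sqrt (2 * Real.pi) = 2 * Real.sqrt (Real.pi / 2) := by
    rw [show (2:ℝ) * Real.pi = 2^2 * (Real.pi / 2) by ring, Real.sqrt_mul (by positivity),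
      Real.sqrt_sq (by norm_num)]
  have hs2π0 : 0 < Real.sqrt (2 * Real.pi) := Real.sqrt_pos.mpr h2π
  have key1 : β * (ϑ - ρ) = Real.sqrt (2 * Real.pi) := by
    have : ϑ - ρ = 2 * (Real.sqrt (Real.pi / 2) / β) := by rw [hϑ, hρ]; ring
    rw [this, hsqrt2π]; field_simp
  -- the canonical functions
  set g : ℝ → ℝ := fun z => Real.exp (-(c * z ^ (2/α))) with hg'
  have hgcont : Continuous g := by
    apply Real.continuous_exp.comp
    apply Continuous.neg
    apply continuous_const.mul
    exact continuous_iff_continuousAt.mpr fun x =>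
      Real.continuousAt_rpow_const x _ (Or.inr hp0.le)
  set f1 : ℝ → ℝ := fun z => z ^ (2/α - 1) * (2 * c / α * g z) with hf1
  set f2 : ℝ → ℝ := fun z => z ^ (2/α - 1) * (2 * c / α * g z * (ϑ - z)) with hf2
  have hrint : (-1:ℝ) < 2/α - 1 := by linarith
  have hint1 : ∀ a b : ℝ, IntervalIntegrable f1 volume a b := fun a b =>
    (intervalIntegral.intervalIntegrable_rpow' hrint).mul_continuousOn
      ((continuous_const.mul hgcont).continuousOn)
  have hint2 : ∀ a b : ℝ, IntervalIntegrable f2 volume a b := fun a b =>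
    (intervalIntegral.intervalIntegrable_rpow' hrint).mul_continuousOn
      (((continuous_const.mul hgcont).mul (continuous_const.sub continuous_id)).continuousOn)
  -- derivative of g
  have hgderiv : ∀ x : ℝ, 0 < x →
      HasDerivAt g (-(f1 x)) x := by
    intro x hx
    have h1 : HasDerivAt (fun z : ℝ => z ^ (2/α)) (2/α * x ^ (2/α - 1)) x :=
      Real.hasDerivAt_rpow_const (Or.inl hx.ne')
    have h2 : HasDerivAt (fun z : ℝ => -(c * z ^ (2/α))) (-(c * (2/α * x ^ (2/α - 1)))) x :=
      (h1.const_mul c).neg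
    have h3 := h2.exp
    convert h3 using 1
    simp only [hf1, hg']
    ring
  -- FTC 1 : ∫ z in a..b, f1 z = g a - g b for 0 ≤ a < b
  have hFTC1 : ∀ a b : ℝ, 0 ≤ a → a < b → ∫ z in a..b, f1 z = g a - g b := by
    intro a b ha hab
    have := intervalIntegral.integral_eq_sub_of_hasDerivAt_of_tendsto (f := fun z => -(g z))
      (f' := f1) hab
      (fun x hx => by
        have := (hgderiv x (lt_of_le_of_lt ha hx.1)).neg
        rw [neg_neg] at this; exact this)
      (hint1 a b)
      (((hgcont.neg).tendsto a).mono_left nhdsWithin_le_nhds)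
      (((hgcont.neg).tendsto b).mono_left nhdsWithin_le_nhds)
    rw [this]; simp only [Pi.neg_apply]; ring
  -- FTC 2 : ∫ z in ρ..ϑ, (g z + f2 z) = (ϑ - ρ) * g ρ
  have hFTC2 : ∫ z in ρ..ϑ, (g z + f2 z) = (ϑ - ρ) * g ρ := by
    have := intervalIntegral.integral_eq_sub_of_hasDerivAt_of_tendsto
      (f := fun z => (z - ϑ) * g z) (f' := fun z => g z + f2 z) hρϑ
      (fun x hx => by
        have hx0 : 0 < x := lt_of_le_of_lt hρ0 hx.1
        have h1 : HasDerivAt (fun z : ℝ => z - ϑ) 1 x := (hasDerivAt_id x).sub_const ϑ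
        have h2 : HasDerivAt (fun z => (z - ϑ) * g z) (1 * g x + (x - ϑ) * -f1 x) x :=
          h1.mul (hgderiv x hx0)
        refine h2.congr_deriv ?_
        simp only [f2, f1]
        ring)
      ((hgcont.intervalIntegrable ρ ϑ).add (hint2 ρ ϑ))
      ((((continuous_id.sub continuous_const).mul hgcont).tendsto ρ).mono_left
        nhdsWithin_le_nhds)
      ((((continuous_id.sub continuous_const).mul hgcont).tendsto ϑ).mono_left
        nhdsWithin_le_nhds)
    simp only [Pi.mul_apply, Pi.sub_apply, id_eq] at this
    rw [this]; ring
  -- substitution connecting the gamma integrand with g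
  set a' : ℝ := c * ρ ^ (2/α) with ha'
  set b' : ℝ := c * ϑ ^ (2/α) with hb'
  have hρp0 : (0:ℝ) ≤ ρ ^ (2/α) := Real.rpow_nonneg hρ0 _
  have ha'0 : 0 ≤ a' := by positivity
  have ha'b' : a' ≤ b' :=
    mul_le_mul_of_nonneg_left (Real.rpow_le_rpow hρ0 hρϑ.le hp0.le) hc0.le
  have hq1 : (1:ℝ) ≤ α/2 := by linarith
  have hq0 : (0:ℝ) ≤ α/2 - 1 := by linarith
  have hcs : (0:ℝ) < c ^ (α/2) := Real.rpow_pos_of_pos hc0 _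
  have hcsplit : c ^ (α/2) = c * c ^ (α/2 - 1) := by
    rw [show α/2 = 1 + (α/2 - 1) by ring, Real.rpow_add hc0, Real.rpow_one]
    congr 1
    ring
  have hφderiv : ∀ t : ℝ, HasDerivAt (fun t : ℝ => (t/c) ^ (α/2))
      (α/2 * (t/c) ^ (α/2 - 1) * (1/c)) t := by
    intro t
    have h0 : HasDerivAt (fun t : ℝ => t / c) (1/c) t := by
      simpa using (hasDerivAt_id t).div_const c
    have := h0.rpow_const (p := α/2) (Or.inr hq1)
    convert this using 1
    ring
  have hφval : ∀ x : ℝ, 0 ≤ x → (c * x ^ (2/α) / c) ^ (α/2) = x := by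
    intro x hx
    rw [mul_div_cancel_left₀ _ hc0.ne', ← Real.rpow_mul hx,
      show 2/α * (α/2) = 1 by field_simp, Real.rpow_one]
  have hsub : ∫ t in a'..b', t ^ (α/2 - 1) * Real.exp (-t)
      = 2 * c ^ (α/2) / α * ∫ z in ρ..ϑ, g z := by
    have hcomp := intervalIntegral.integral_comp_smul_deriv (a := a') (b := b')
      (f := fun t => (t/c) ^ (α/2)) (f' := fun t => α/2 * (t/c) ^ (α/2 - 1) * (1/c))
      (g := g) (fun x _ => hφderiv x)
      ((((continuous_const.mul ((continuous_id.div_const c).rpow_const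
        (fun x => Or.inr hq0))).mul continuous_const)).continuousOn)
      hgcont
    simp only [ha', hb', smul_eq_mul, Function.comp] at hcomp
    rw [hφval ρ hρ0, hφval ϑ hϑ0.le] at hcomp
    have hcongr : ∫ t in a'..b', α/2 * (t/c) ^ (α/2-1) * (1/c) * g ((t/c) ^ (α/2))
        = ∫ t in a'..b', α / (2 * c ^ (α/2)) * (t ^ (α/2-1) * Real.exp (-t)) := by
      apply intervalIntegral.integral_congr
      intro t ht
      rw [uIcc_of_le ha'b'] at ht
      have ht0 : 0 ≤ t := le_trans ha'0 ht.1
      have htc : (0:ℝ) ≤ t / c := div_nonneg ht0 hc0.le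
      have h1 : ((t/c) ^ (α/2)) ^ (2/α) = t/c := by
        rw [← Real.rpow_mul htc, show α/2 * (2/α) = 1 by field_simp, Real.rpow_one]
      have h3 : (t/c) ^ (α/2-1) = t ^ (α/2-1) / c ^ (α/2-1) :=
        Real.div_rpow ht0 hc0.le _
      simp only [hg']
      rw [h1, mul_div_cancel₀ _ hc0.ne', h3, hcsplit]
      have hc1 : (0:ℝ) < c ^ (α/2-1) := Real.rpow_pos_of_pos hc0 _
      field_simp
    simp only [hg'] at hcomp hcongr ⊢
    rw [hcongr, intervalIntegral.integral_const_mul] at hcomp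
    rw [← hcomp]
    field_simp
  -- the incomplete Gamma difference
  have hGammaInt : IntegrableOn (fun t : ℝ => t ^ (α/2 - 1) * Real.exp (-t)) (Ioi a') := by
    have h := Real.GammaIntegral_convergent (s := α/2) (by linarith)
    have h2 : IntegrableOn (fun t : ℝ => t ^ (α/2-1) * Real.exp (-t)) (Ioi 0) :=
      (integrableOn_congr_fun (fun x _ => mul_comm _ _) measurableSet_Ioi).mpr h
    exact h2.mono_set (Ioi_subset_Ioi ha'0)
  have hGdiff : Ginc (α/2) b' - Ginc (α/2) a'
      = - ∫ t in a'..b', t ^ (α/2-1) * Real.exp (-t) := by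
    rw [hG, hG, intervalIntegral.integral_of_le ha'b']
    have hsplit : ∫ t in Ioi a', t^(α/2-1) * Real.exp (-t)
        = (∫ t in Ioc a' b', t^(α/2-1) * Real.exp (-t))
          + ∫ t in Ioi b', t^(α/2-1) * Real.exp (-t) := by
      rw [← setIntegral_union (Ioc_disjoint_Ioi le_rfl) measurableSet_Ioi
        (hGammaInt.mono_set Ioc_subset_Ioi_self)
        (hGammaInt.mono_set (Ioi_subset_Ioi ha'b')),
        Ioc_union_Ioi_eq_Ioi ha'b']
    linarith [hsplit]
  -- pointwise identification of W * f on the three pieces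
  have hW1 : ∀ z ∈ Ioc (0:ℝ) ρ, W z * f z = f1 z := by
    intro z hz
    rw [hW z, if_pos hz.2, hf z hz.1]
    simp only [hξ, add_zero, zero_mul, sub_zero, hf1, hg']
    rw [hc]
    ring
  have hhalf : β / Real.sqrt (2*Real.pi) * (ϑ - θ) = 1/2 := by
    have hsπ2 : (0:ℝ) < Real.sqrt (Real.pi/2) := Real.sqrt_pos.mpr (by positivity)
    rw [hϑ, hsqrt2π]
    field_simp
    ring
  have hW2 : ∀ z ∈ Ioc ρ ϑ, W z * f z = β / Real.sqrt (2*Real.pi) * f2 z := by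
    intro z hz
    have hz0 : 0 < z := lt_of_le_of_lt hρ0 hz.1
    rw [hW z, if_neg (not_le.mpr hz.1), hf z hz0]
    rcases eq_or_lt_of_le hz.2 with he | hlt
    · rw [he, if_neg (lt_irrefl ϑ)]
      simp only [hf2, hg']
      ring
    · rw [if_pos hlt]
      have hlin : 1/2 - β / Real.sqrt (2*Real.pi) * (z - θ)
          = β / Real.sqrt (2*Real.pi) * (ϑ - z) := by
        rw [← hhalf]; ring
      rw [hlin]
      simp only [hξ, add_zero, zero_mul, sub_zero, hf2, hg']
      rw [hc]
      ring
  have hW3 : ∀ z ∈ Ioi ϑ, W z * f z = 0 := by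
    intro z hz
    rw [hW z, if_neg (not_le.mpr (lt_trans hρϑ hz)), if_neg (not_lt.mpr (le_of_lt hz)),
      zero_mul]
  -- integrability of the pieces
  have hWf1int : IntegrableOn (fun z => W z * f z) (Ioc 0 ρ) volume :=
    (integrableOn_congr_fun hW1 measurableSet_Ioc).mpr
      ((intervalIntegrable_iff_integrableOn_Ioc_of_le hρ0).mp (hint1 0 ρ))
  have hWf2int : IntegrableOn (fun z => W z * f z) (Ioc ρ ϑ) volume :=
    (integrableOn_congr_fun hW2 measurableSet_Ioc).mpr
      ((intervalIntegrable_iff_integrableOn_Ioc_of_le hρϑ.le).mp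
        ((hint2 ρ ϑ).const_mul _))
  have hWf3int : IntegrableOn (fun z => W z * f z) (Ioi ϑ) volume :=
    (integrableOn_congr_fun hW3 measurableSet_Ioi).mpr integrableOn_zero
  -- splitting the integral
  have hsplit2 : ∫ z in Ioi ρ, W z * f z
      = (∫ z in Ioc ρ ϑ, W z * f z) + ∫ z in Ioi ϑ, W z * f z := by
    rw [← setIntegral_union (Ioc_disjoint_Ioi le_rfl) measurableSet_Ioi hWf2int hWf3int,
      Ioc_union_Ioi_eq_Ioi hρϑ.le]
  have hIoiρint : IntegrableOn (fun z => W z * f z) (Ioi ρ) volume := by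
    rw [← Ioc_union_Ioi_eq_Ioi hρϑ.le]
    exact hWf2int.union hWf3int
  have hsplit1 : ∫ z in Ioi (0:ℝ), W z * f z
      = (∫ z in Ioc 0 ρ, W z * f z) + ∫ z in Ioi ρ, W z * f z := by
    rw [← setIntegral_union (Ioc_disjoint_Ioi le_rfl) measurableSet_Ioi hWf1int hIoiρint,
      Ioc_union_Ioi_eq_Ioi hρ0]
  -- values of the pieces
  have hg0 : g 0 = 1 := by
    simp only [hg', Real.zero_rpow hp0.ne', mul_zero, neg_zero, Real.exp_zero]
  have hv1 : ∫ z in Ioc (0:ℝ) ρ, W z * f z = 1 - g ρ := by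
    rcases eq_or_lt_of_le hρ0 with h0 | h0
    · rw [← h0, Set.Ioc_self]
      simp [hg0]
    · rw [setIntegral_congr_fun measurableSet_Ioc hW1,
        ← intervalIntegral.integral_of_le hρ0, hFTC1 0 ρ le_rfl h0, hg0]
  have hv2 : ∫ z in Ioc ρ ϑ, W z * f z
      = β / Real.sqrt (2*Real.pi) * ((ϑ-ρ) * g ρ - ∫ z in ρ..ϑ, g z) := by
    rw [setIntegral_congr_fun measurableSet_Ioc hW2,
      ← intervalIntegral.integral_of_le hρϑ.le,
      intervalIntegral.integral_const_mul]
    congr 1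
    have hadd := intervalIntegral.integral_add (hgcont.intervalIntegrable ρ ϑ) (hint2 ρ ϑ)
    rw [hadd] at hFTC2
    linarith [hFTC2]
  have hv3 : ∫ z in Ioi ϑ, W z * f z = 0 := by
    rw [setIntegral_congr_fun measurableSet_Ioi hW3]
    simp
  -- assemble
  have hϑρ : ϑ - ρ = Real.sqrt (2*Real.pi) / β := by
    rw [eq_div_iff hβ0.ne', mul_comm]
    exact key1
  rw [hsplit1, hsplit2, hv1, hv2, hv3, hGdiff, hsub, hϑρ]
  field_simp
  ring
end

section
/- Suppose ξ = 0, α = 4 and ζ λ > 0, and assume ρ ≥ 0. Then the approximated outage probability satisfies ∫_0^∞ W(z) f(z) dz = β(ϑ − ρ)/√(2π) + (2β/(√(2π)(ζλ)^2)) [ e^{−ζλ√ϑ}(ζλ√ϑ + 1) − e^{−ζλ√ρ}(ζλ√ρ + 1) ]. (Corollary 1, the interference-limited outage probability for dense urban scenarios with path-loss exponent 4.) -/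
open MeasureTheory Set Real

/-- Corollary 1: the interference-limited (`ξ = 0`) approximated outage
probability for dense urban scenarios with path-loss exponent `α = 4`. -/
theorem stmt_2
    (α ζ lam ξ : ℝ) (hα : 2 < α) (hα4 : α = 4) (hζ : 0 ≤ ζ) (hlam : 0 ≤ lam)
    (hξ : ξ = 0) (hζlam : 0 < ζ * lam)
    (f : ℝ → ℝ)
    (hf : ∀ z > (0:ℝ), f z = (2 * ζ * lam / α * z ^ (2/α - 1) + ξ) *
      Real.exp (-(ζ * lam * z ^ (2/α)) - ξ * z))
    (n R θ β ϑ ρ : ℝ) (hn : 0 < n) (hR : 0 < R)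
    (hθ : θ = 2 ^ R - 1)
    (hβ : β = Real.sqrt (n / (2 * Real.pi)) * (2 ^ (2 * R) - 1) ^ (-(1:ℝ)/2))
    (hϑ : ϑ = θ + Real.sqrt (Real.pi / 2) / β)
    (hρ : ρ = θ - Real.sqrt (Real.pi / 2) / β)
    (hρ0 : 0 ≤ ρ)
    (W : ℝ → ℝ)
    (hW : ∀ t, W t = if t ≤ ρ then 1
      else if t < ϑ then 1/2 - β / Real.sqrt (2 * Real.pi) * (t - θ) else 0) :
    ∫ z in Set.Ioi (0:ℝ), W z * f z =
      β * (ϑ - ρ) / Real.sqrt (2 * Real.pi)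
        + 2 * β / (Real.sqrt (2 * Real.pi) * (ζ * lam) ^ 2) *
          (Real.exp (-(ζ * lam * Real.sqrt ϑ)) * (ζ * lam * Real.sqrt ϑ + 1)
            - Real.exp (-(ζ * lam * Real.sqrt ρ)) * (ζ * lam * Real.sqrt ρ + 1)) := by
  set c : ℝ := ζ * lam with hc_def
  have hc : 0 < c := hζlam
  set s : ℝ := Real.sqrt (2 * Real.pi) with hs_def
  have hs : 0 < s := Real.sqrt_pos.mpr (by positivity)
  -- β > 0
  have hβpos : 0 < β := by
    rw [hβ]
    have h1 : (0:ℝ) < Real.sqrt (n / (2 * Real.pi)) :=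
      Real.sqrt_pos.mpr (by positivity)
    have h2 : (1:ℝ) < (2:ℝ) ^ (2 * R) :=
      (Real.one_lt_rpow_iff_of_pos (by norm_num)).mpr (Or.inl ⟨by norm_num, by linarith⟩)
    have h3 : (0:ℝ) < (2:ℝ) ^ (2 * R) - 1 := by linarith
    have h4 : (0:ℝ) < ((2:ℝ) ^ (2 * R) - 1) ^ (-(1:ℝ)/2) := Real.rpow_pos_of_pos h3 _
    positivity
  -- √(π/2)/√(2π) = 1/2
  have hhalf : Real.sqrt (Real.pi / 2) / s = 1 / 2 := by
    have hps : (0:ℝ) < Real.sqrt (Real.pi / 2) := Real.sqrt_pos.mpr (by positivity)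
    have h4 : Real.sqrt 4 = 2 := by
      rw [show (4:ℝ) = 2 ^ 2 by norm_num, Real.sqrt_sq (by norm_num : (0:ℝ) ≤ 2)]
    have : s = Real.sqrt (Real.pi / 2) * 2 := by
      rw [hs_def, show (2 * Real.pi) = (Real.pi / 2) * 4 by ring,
        Real.sqrt_mul (by positivity), h4]
    rw [this]
    field_simp
  have hρϑ : ρ < ϑ := by
    have : 0 < Real.sqrt (Real.pi / 2) / β :=
      div_pos (Real.sqrt_pos.mpr (by positivity)) hβpos
    rw [hρ, hϑ]; linarith
  have hϑ0 : 0 < ϑ := lt_of_le_of_lt hρ0 hρϑ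
  -- the key normalizations
  have hk1 : β * (ϑ - ρ) / s = 1 := by
    have : ϑ - ρ = 2 * (Real.sqrt (Real.pi / 2) / β) := by rw [hϑ, hρ]; ring
    have e1 : β * (2 * (Real.sqrt (Real.pi / 2) / β)) = 2 * Real.sqrt (Real.pi / 2) := by
      rw [mul_comm, mul_assoc, div_mul_cancel₀ _ hβpos.ne']
    rw [this, e1, mul_div_assoc, hhalf]
    norm_num
  have hkey2 : ∀ z : ℝ, 1/2 - β / s * (z - θ) = β / s * (ϑ - z) := by
    intro z
    have h1 : β / s * (ϑ - z) = β / s * (θ - z) + β / s * (Real.sqrt (Real.pi / 2) / β) := by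
      rw [hϑ]; ring
    have h2 : β / s * (Real.sqrt (Real.pi / 2) / β) = Real.sqrt (Real.pi / 2) / s := by
      generalize Real.sqrt (Real.pi / 2) = x
      field_simp
    rw [h1, h2, hhalf]; ring
  -- simplified form of f on the positive axis
  have hf' : ∀ z : ℝ, 0 < z →
      f z = c / (2 * Real.sqrt z) * Real.exp (-(c * Real.sqrt z)) := by
    intro z hz
    have hsz : 0 < Real.sqrt z := Real.sqrt_pos.mpr hz
    rw [hf z hz, hα4, hξ]
    have e1 : z ^ ((2:ℝ)/4) = Real.sqrt z := by
      rw [show (2:ℝ)/4 = 1/2 by norm_num, ← Real.sqrt_eq_rpow]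
    have e2 : z ^ ((2:ℝ)/4 - 1) = (Real.sqrt z)⁻¹ := by
      rw [show (2:ℝ)/4 - 1 = -(1/2) by norm_num, Real.rpow_neg hz.le, ← Real.sqrt_eq_rpow]
    rw [e1, e2]
    field_simp
    rw [hc_def]
    simp only [mul_zero, zero_mul, add_zero, sub_zero]
    ring
  -- measurability of W
  have hWfun : W = fun t => if t ≤ ρ then (1:ℝ)
      else if t < ϑ then 1/2 - β / s * (t - θ) else 0 := funext hW
  have hWm : Measurable W := by
    rw [hWfun]
    apply Measurable.ite (measurableSet_le measurable_id measurable_const) measurable_const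
    apply Measurable.ite (measurableSet_lt measurable_id measurable_const) (by fun_prop)
      measurable_const
  have hWbound : ∀ t : ℝ, |W t| ≤ 1 := by
    intro t
    rw [hW]
    split_ifs with h1 h2
    · simp
    · push_neg at h1
      rw [hkey2]
      have hkpos : 0 < β / s := div_pos hβpos hs
      have h3 : 0 ≤ β / s * (ϑ - t) := le_of_lt (mul_pos hkpos (by linarith))
      have h4 : β / s * (ϑ - t) ≤ β / s * (ϑ - ρ) := by
        apply mul_le_mul_of_nonneg_left (by linarith) hkpos.le
      have h5 : β / s * (ϑ - ρ) = 1 := by rw [← hk1]; ring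
      rw [abs_of_nonneg h3]; linarith
    · simp
  -- explicit version of f
  set g : ℝ → ℝ := fun z => c / (2 * Real.sqrt z) * Real.exp (-(c * Real.sqrt z)) with hg_def
  have hgm : Measurable g := by
    apply Measurable.mul
    · exact (measurable_const.div ((Real.continuous_sqrt.measurable).const_mul 2))
    · exact (((Real.continuous_sqrt.measurable).const_mul c).neg).exp
  -- dominating function
  have hbase : IntegrableOn (fun z => c * z ^ (-(1:ℝ)/2)) (Ioc 0 ϑ) volume := by
    have := (intervalIntegral.intervalIntegrable_rpow'
      (a := 0) (b := ϑ) (r := -(1:ℝ)/2) (by norm_num)).const_mul c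
    exact (intervalIntegrable_iff_integrableOn_Ioc_of_le hϑ0.le).mp this
  -- integrability of W * f on (0, ϑ]
  have hintWf : IntegrableOn (fun z => W z * f z) (Ioc 0 ϑ) volume := by
    apply Integrable.mono hbase
    · have h1 : AEStronglyMeasurable (fun z => W z * g z)
          (volume.restrict (Ioc (0:ℝ) ϑ)) :=
        ((hWm.mul hgm).aestronglyMeasurable)
      apply h1.congr
      rw [Filter.eventuallyEq_iff_exists_mem]
      refine ⟨Ioc 0 ϑ, ?_, fun z hz => by
        show W z * g z = W z * f z
        rw [hf' z hz.1]⟩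
      exact Measure.ae_le_iff_absolutelyContinuous.mp (le_refl _)
        (self_mem_ae_restrict measurableSet_Ioc)
    · rw [ae_restrict_iff' measurableSet_Ioc]
      filter_upwards with z hz
      have hz0 : 0 < z := hz.1
      have hsz : 0 < Real.sqrt z := Real.sqrt_pos.mpr hz0
      have h1 : |f z| ≤ c / Real.sqrt z := by
        rw [hf' z hz0, abs_mul]
        have : |Real.exp (-(c * Real.sqrt z))| ≤ 1 := by
          rw [abs_of_pos (Real.exp_pos _)]
          exact Real.exp_le_one_iff.mpr (by nlinarith)
        have h2 : |c / (2 * Real.sqrt z)| = c / (2 * Real.sqrt z) :=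
          abs_of_pos (by positivity)
        calc |c / (2 * Real.sqrt z)| * |Real.exp (-(c * Real.sqrt z))|
            ≤ |c / (2 * Real.sqrt z)| * 1 :=
              mul_le_mul_of_nonneg_left this (abs_nonneg _)
          _ = c / (2 * Real.sqrt z) := by rw [mul_one, h2]
          _ ≤ c / Real.sqrt z := by
              apply div_le_div_of_nonneg_left hc.le hsz; linarith
      have h3 : z ^ (-(1:ℝ)/2) = (Real.sqrt z)⁻¹ := by
        rw [show (-(1:ℝ)/2) = -(1/2) by norm_num, Real.rpow_neg hz0.le, ← Real.sqrt_eq_rpow]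
      have h4 : ‖c * z ^ (-(1:ℝ)/2)‖ = c / Real.sqrt z := by
        rw [Real.norm_eq_abs, h3, abs_of_pos (by positivity)]
        field_simp
      rw [h4, Real.norm_eq_abs, abs_mul]
      calc |W z| * |f z| ≤ 1 * |f z| := mul_le_mul_of_nonneg_right (hWbound z) (abs_nonneg _)
        _ = |f z| := one_mul _
        _ ≤ c / Real.sqrt z := h1
  -- split the integral
  have hsplit0 : ∫ z in Set.Ioi (0:ℝ), W z * f z =
      (∫ z in Ioc (0:ℝ) ϑ, W z * f z) + ∫ z in Ioi ϑ, W z * f z := by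
    rw [← setIntegral_union (Ioc_disjoint_Ioi le_rfl) measurableSet_Ioi hintWf ?_,
      Ioc_union_Ioi_eq_Ioi hϑ0.le]
    · apply (integrable_zero _ _ _).congr
      rw [Filter.eventuallyEq_iff_exists_mem]
      refine ⟨Ioi ϑ, Measure.ae_le_iff_absolutelyContinuous.mp (le_refl _)
        (self_mem_ae_restrict measurableSet_Ioi), fun z hz => ?_⟩
      have h1 : ¬ (z ≤ ρ) := by push_neg; exact lt_trans hρϑ hz
      have h2 : ¬ (z < ϑ) := not_lt.mpr (le_of_lt hz)
      show (0:ℝ) = W z * f z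
      rw [hW]; simp [h1, h2]
  have hzero : ∫ z in Ioi ϑ, W z * f z = 0 := by
    rw [setIntegral_congr_fun measurableSet_Ioi
      (g := fun _ => (0:ℝ)) ?_, integral_zero]
    intro z hz
    have h1 : ¬ (z ≤ ρ) := by push_neg; exact lt_trans hρϑ hz
    have h2 : ¬ (z < ϑ) := not_lt.mpr (le_of_lt hz)
    show W z * f z = 0
    rw [hW]; simp [h1, h2]
  have hsplit1 : ∫ z in Ioc (0:ℝ) ϑ, W z * f z =
      (∫ z in Ioc (0:ℝ) ρ, W z * f z) + ∫ z in Ioc ρ ϑ, W z * f z := by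
    rw [← setIntegral_union (Ioc_disjoint_Ioc_of_le le_rfl) measurableSet_Ioc
      (hintWf.mono_set (Ioc_subset_Ioc_right hρϑ.le))
      (hintWf.mono_set (Ioc_subset_Ioc_left hρ0)),
      Ioc_union_Ioc_eq_Ioc hρ0 hρϑ.le]
  -- piece 1 : on (0, ρ], W = 1
  have hWf1 : ∀ z ∈ Ioc (0:ℝ) ρ, W z * f z = f z := by
    intro z hz
    rw [hW]; simp [hz.2]
  have hint1 : IntegrableOn f (Ioc (0:ℝ) ρ) volume := by
    apply IntegrableOn.congr_fun (hintWf.mono_set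
      (Ioc_subset_Ioc_right hρϑ.le)) _ measurableSet_Ioc
    intro z hz; exact hWf1 z hz
  have piece1 : ∫ z in Ioc (0:ℝ) ρ, W z * f z =
      1 - Real.exp (-(c * Real.sqrt ρ)) := by
    rw [setIntegral_congr_fun measurableSet_Ioc hWf1,
      ← intervalIntegral.integral_of_le hρ0]
    have := intervalIntegral.integral_eq_sub_of_hasDeriv_right_of_le hρ0
      (f := fun z => -Real.exp (-(c * Real.sqrt z))) (f' := f)
      (by fun_prop) ?_ ((intervalIntegrable_iff_integrableOn_Ioc_of_le hρ0).mpr hint1)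
    · rw [this]
      simp only [Real.sqrt_zero, mul_zero, neg_zero, Real.exp_zero]
      ring
    · intro x hx
      have hx0 : 0 < x := hx.1
      have hsx : 0 < Real.sqrt x := Real.sqrt_pos.mpr hx0
      have h1 : HasDerivAt (fun z => -Real.exp (-(c * Real.sqrt z)))
          (-(Real.exp (-(c * Real.sqrt x)) * -(c * (1 / (2 * Real.sqrt x))))) x :=
        (((Real.hasDerivAt_sqrt hx0.ne').const_mul c).neg.exp).neg
      have h2 : -(Real.exp (-(c * Real.sqrt x)) * -(c * (1 / (2 * Real.sqrt x)))) = f x := by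
        rw [hf' x hx0]; field_simp
      rw [← h2]
      exact h1.hasDerivWithinAt
  -- piece 2 : on (ρ, ϑ], W z = β/s * (ϑ - z)
  have hWf2 : ∀ z ∈ Ioc ρ ϑ, W z * f z = β / s * (ϑ - z) * f z := by
    intro z hz
    rcases lt_or_eq_of_le hz.2 with h | h
    · rw [hW]
      have h1 : ¬ (z ≤ ρ) := not_le.mpr hz.1
      simp only [h1, if_false, h, if_true]
      rw [hkey2]
    · subst h
      rw [hW]
      have h1 : ¬ (z ≤ ρ) := not_le.mpr hz.1
      simp [h1]
  have hint2 : IntegrableOn (fun z => β / s * (ϑ - z) * f z) (Ioc ρ ϑ) volume := by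
    apply IntegrableOn.congr_fun (hintWf.mono_set
      (Ioc_subset_Ioc_left hρ0)) _ measurableSet_Ioc
    intro z hz; exact hWf2 z hz
  set G : ℝ → ℝ := fun z => β / s * ((z - ϑ) * Real.exp (-(c * Real.sqrt z))
      + 2 / c ^ 2 * (Real.exp (-(c * Real.sqrt z)) * (c * Real.sqrt z + 1))) with hG_def
  have piece2 : ∫ z in Ioc ρ ϑ, W z * f z = G ϑ - G ρ := by
    rw [setIntegral_congr_fun measurableSet_Ioc hWf2,
      ← intervalIntegral.integral_of_le hρϑ.le]
    apply intervalIntegral.integral_eq_sub_of_hasDeriv_right_of_le hρϑ.le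
      (by rw [hG_def]; fun_prop) ?_
      ((intervalIntegrable_iff_integrableOn_Ioc_of_le hρϑ.le).mpr hint2)
    intro x hx
    have hx0 : 0 < x := lt_of_le_of_lt hρ0 hx.1
    have hsx : 0 < Real.sqrt x := Real.sqrt_pos.mpr hx0
    have hsqrt : HasDerivAt (fun z => Real.sqrt z) (1 / (2 * Real.sqrt x)) x :=
      Real.hasDerivAt_sqrt hx0.ne'
    have hE : HasDerivAt (fun z => Real.exp (-(c * Real.sqrt z)))
        (Real.exp (-(c * Real.sqrt x)) * -(c * (1 / (2 * Real.sqrt x)))) x :=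
      ((hsqrt.const_mul c).neg).exp
    have hP1 : HasDerivAt (fun z => (z - ϑ) * Real.exp (-(c * Real.sqrt z)))
        (1 * Real.exp (-(c * Real.sqrt x))
          + (x - ϑ) * (Real.exp (-(c * Real.sqrt x)) * -(c * (1 / (2 * Real.sqrt x))))) x :=
      ((hasDerivAt_id x).sub_const ϑ).mul hE
    have hP2 : HasDerivAt (fun z => Real.exp (-(c * Real.sqrt z)) * (c * Real.sqrt z + 1))
        (Real.exp (-(c * Real.sqrt x)) * -(c * (1 / (2 * Real.sqrt x))) * (c * Real.sqrt x + 1)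
          + Real.exp (-(c * Real.sqrt x)) * (c * (1 / (2 * Real.sqrt x)))) x :=
      hE.mul ((hsqrt.const_mul c).add_const 1)
    have hG' : HasDerivAt G
        (β / s * ((1 * Real.exp (-(c * Real.sqrt x))
          + (x - ϑ) * (Real.exp (-(c * Real.sqrt x)) * -(c * (1 / (2 * Real.sqrt x)))))
          + 2 / c ^ 2 * (Real.exp (-(c * Real.sqrt x)) * -(c * (1 / (2 * Real.sqrt x)))
              * (c * Real.sqrt x + 1)
            + Real.exp (-(c * Real.sqrt x)) * (c * (1 / (2 * Real.sqrt x)))))) x :=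
      (hP1.add (hP2.const_mul (2 / c ^ 2))).const_mul (β / s)
    have heq : β / s * ((1 * Real.exp (-(c * Real.sqrt x))
          + (x - ϑ) * (Real.exp (-(c * Real.sqrt x)) * -(c * (1 / (2 * Real.sqrt x)))))
          + 2 / c ^ 2 * (Real.exp (-(c * Real.sqrt x)) * -(c * (1 / (2 * Real.sqrt x)))
              * (c * Real.sqrt x + 1)
            + Real.exp (-(c * Real.sqrt x)) * (c * (1 / (2 * Real.sqrt x)))))
        = β / s * (ϑ - x) * f x := by
      rw [hf' x hx0]
      field_simp
      ring
    rw [← heq]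
    exact hG'.hasDerivWithinAt
  -- assemble
  have hGϑ : G ϑ = β / s * (2 / c ^ 2 *
      (Real.exp (-(c * Real.sqrt ϑ)) * (c * Real.sqrt ϑ + 1))) := by
    show β / s * ((ϑ - ϑ) * Real.exp (-(c * Real.sqrt ϑ))
      + 2 / c ^ 2 * (Real.exp (-(c * Real.sqrt ϑ)) * (c * Real.sqrt ϑ + 1))) = _
    ring
  have hGρ : G ρ = β / s * ((ρ - ϑ) * Real.exp (-(c * Real.sqrt ρ))
      + 2 / c ^ 2 * (Real.exp (-(c * Real.sqrt ρ)) * (c * Real.sqrt ρ + 1))) := rfl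
  rw [hsplit0, hzero, hsplit1, piece1, piece2, hGϑ, hGρ]
  linear_combination (Real.exp (-(c * Real.sqrt ρ)) - 1) * hk1
end

section
/- Let c ≥ 0, d > 0 and 0 ≤ a ≤ b. Then ∫_a^b ((c/2)√z + d z) e^{−c√z − d z} dz = (a + 1/d) e^{−c√a − d a} − (b + 1/d) e^{−c√b − d b} + (c √π /(2 d^{3/2})) e^{c²/(4d)} [ erf(c/(2√d) + √(d a)) − erf(c/(2√d) + √(d b)) ], where erf(x) = (2/√π) ∫_0^x e^{−u²} du. (The key integral identity of Appendix C, evaluating ∫ z f(z) dz for the SINR density with α = 4 and noise term ξ = d, ζλ = c.) -/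
open MeasureTheory Set Real

/-- The key integral identity of Appendix C: for `c ≥ 0`, `d > 0`, `0 ≤ a ≤ b`,
`∫_a^b ((c/2)√z + dz) e^(−c√z − dz) dz` has the stated closed form in terms of the
Gauss error function `erf(x) = (2/√π) ∫_0^x e^(−u²) du`. -/
theorem stmt_3
    (c d a b : ℝ) (hc : 0 ≤ c) (hd : 0 < d) (ha : 0 ≤ a) (hab : a ≤ b)
    (erf : ℝ → ℝ)
    (herf : ∀ x, erf x = 2 / Real.sqrt Real.pi * ∫ u in (0:ℝ)..x, Real.exp (-u^2)) :
    ∫ z in a..b, (c/2 * Real.sqrt z + d * z) * Real.exp (-(c * Real.sqrt z) - d * z) =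
      (a + 1/d) * Real.exp (-(c * Real.sqrt a) - d * a)
        - (b + 1/d) * Real.exp (-(c * Real.sqrt b) - d * b)
        + c * Real.sqrt Real.pi / (2 * d ^ ((3:ℝ)/2)) * Real.exp (c^2 / (4*d)) *
          (erf (c / (2 * Real.sqrt d) + Real.sqrt (d * a))
            - erf (c / (2 * Real.sqrt d) + Real.sqrt (d * b))) := by
  have hπ : (0:ℝ) < Real.sqrt Real.pi := Real.sqrt_pos.mpr Real.pi_pos
  have hsd : (0:ℝ) < Real.sqrt d := Real.sqrt_pos.mpr hd
  have hdd : Real.sqrt d * Real.sqrt d = d := Real.mul_self_sqrt hd.le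
  have hd32 : d ^ ((3:ℝ)/2) = d * Real.sqrt d := by
    rw [show ((3:ℝ)/2) = 1 + 1/2 by norm_num, Real.rpow_add hd, Real.rpow_one,
      ← Real.sqrt_eq_rpow]
  set K : ℝ := c * Real.sqrt Real.pi / (2 * d ^ ((3:ℝ)/2)) * Real.exp (c^2 / (4*d)) with hK
  set E : ℝ → ℝ := fun y => ∫ u in (0:ℝ)..y, Real.exp (-u^2) with hEdef
  have hcont : Continuous fun u : ℝ => Real.exp (-u^2) := by continuity
  have hE' : ∀ x : ℝ, HasDerivAt E (Real.exp (-x^2)) x := fun x =>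
    intervalIntegral.integral_hasDerivAt_right (hcont.intervalIntegrable 0 x)
      hcont.stronglyMeasurable.stronglyMeasurableAtFilter hcont.continuousAt
  have hEc : Continuous E := by
    rw [continuous_iff_continuousAt]; exact fun x => (hE' x).continuousAt
  set G : ℝ → ℝ := fun z => -(z + 1/d) * Real.exp (-(c * Real.sqrt z) - d * z)
      - K * (2 / Real.sqrt Real.pi) * E (c / (2 * Real.sqrt d) + Real.sqrt (d * z)) with hGdef
  have key : ∫ z in a..b, (c/2 * Real.sqrt z + d * z) * Real.exp (-(c * Real.sqrt z) - d * z)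
      = G b - G a := by
    apply intervalIntegral.integral_eq_sub_of_hasDerivAt_of_le hab
    · -- continuity of G on Icc a b
      apply Continuous.continuousOn
      have h1 : Continuous fun z : ℝ => Real.exp (-(c * Real.sqrt z) - d * z) :=
        (((continuous_const.mul Real.continuous_sqrt).neg).sub (continuous_const.mul continuous_id)).rexp
      have h2 : Continuous fun z : ℝ => E (c / (2 * Real.sqrt d) + Real.sqrt (d * z)) :=
        hEc.comp (continuous_const.add (Real.continuous_sqrt.comp
          (continuous_const.mul continuous_id)))
      exact (((continuous_id.add continuous_const).neg).mul h1).sub (continuous_const.mul h2)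
    · intro z hz
      have hz0 : 0 < z := lt_of_le_of_lt ha hz.1
      have hs : 0 < Real.sqrt z := Real.sqrt_pos.mpr hz0
      have hzz : Real.sqrt z * Real.sqrt z = z := Real.mul_self_sqrt hz0.le
      have hdz : Real.sqrt (d * z) = Real.sqrt d * Real.sqrt z := Real.sqrt_mul hd.le z
      have hsqrt : HasDerivAt Real.sqrt (1 / (2 * Real.sqrt z)) z := Real.hasDerivAt_sqrt hz0.ne'
      have hexp : HasDerivAt (fun z => Real.exp (-(c * Real.sqrt z) - d * z))
          (Real.exp (-(c * Real.sqrt z) - d * z) * (-(c * (1 / (2 * Real.sqrt z))) - d * 1)) z :=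
        (((hsqrt.const_mul c).neg).sub ((hasDerivAt_id z).const_mul d)).exp
      have H1 := (((hasDerivAt_id z).add_const (1/d)).neg).mul hexp
      have hdzd : HasDerivAt (fun z : ℝ => Real.sqrt (d * z))
          (1 / (2 * Real.sqrt (d * z)) * (d * 1)) z :=
        (Real.hasDerivAt_sqrt (by positivity)).comp z ((hasDerivAt_id z).const_mul d)
      have H2 : HasDerivAt (fun z => E (c / (2 * Real.sqrt d) + Real.sqrt (d * z)))
          (Real.exp (-(c / (2 * Real.sqrt d) + Real.sqrt (d * z))^2)
            * (1 / (2 * Real.sqrt (d * z)) * (d * 1))) z :=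
        (hE' _).comp z (hdzd.const_add _)
      have H := H1.sub (H2.const_mul (K * (2 / Real.sqrt Real.pi)))
      convert H using 1
      · rfl
      simp only [id_eq, Pi.neg_apply]
      have hexpX : Real.exp (-(c / (2 * Real.sqrt d) + Real.sqrt (d * z))^2)
          = Real.exp (-(c^2 / (4*d))) * Real.exp (-(c * Real.sqrt z) - d * z) := by
        rw [← Real.exp_add]
        congr 1
        rw [hdz]
        field_simp
        linear_combination (4*c^2 - 16*Real.sqrt d^2*d*Real.sqrt z^2) * hdd
          + (-16*Real.sqrt d^2*d^2) * hzz
      rw [hexpX, hdz, hK, hd32, Real.exp_neg]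
      have hP := Real.exp_ne_zero (-(c * Real.sqrt z) - d * z)
      have hQ := Real.exp_ne_zero (c^2/(4*d))
      field_simp
      linear_combination (d*c*Real.sqrt d^2) * hzz - c * hdd
    · apply Continuous.intervalIntegrable
      exact ((continuous_const.mul Real.continuous_sqrt).add (continuous_const.mul continuous_id)).mul
        (((continuous_const.mul Real.continuous_sqrt).neg.sub (continuous_const.mul continuous_id)).rexp)
  rw [key]
  simp only [hGdef, herf]
  ring
end

section
/- Suppose α = 4, ξ > 0 and ζ λ ≥ 0, and assume ρ ≥ 0. Then the approximated outage probability for the locally licensed (micro-operator) scenario satisfies ∫_0^∞ W(z) f(z) dz = 1 + (β/(√(2π) ξ)) ( e^{−ζλ√ϑ − ξϑ} − e^{−ζλ√ρ − ξρ} ) − (β ζ λ /(2 √2 ξ^{3/2})) e^{(ζλ)²/(4ξ)} [ erf(ζλ/(2√ξ) + √(ξ ρ)) − erf(ζλ/(2√ξ) + √(ξ ϑ)) ], where erf(x) = (2/√π) ∫_0^x e^{−u²} du. (Proposition 3, the closed-form outage probability for the micro-operator scenario with path-loss exponent 4 and non-negligible noise.) -/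
open MeasureTheory Set Real

lemma aux_G_deriv (a ξ : ℝ) {z : ℝ} (hz : 0 < z) :
    HasDerivAt (fun z => Real.exp (-(a * Real.sqrt z) - ξ * z))
      (-((a / (2 * Real.sqrt z) + ξ) * Real.exp (-(a * Real.sqrt z) - ξ * z))) z := by
  have h1 : HasDerivAt (fun z : ℝ => -(a * Real.sqrt z) - ξ * z)
      (-(a / (2 * Real.sqrt z)) - ξ) z := by
    have hs := (Real.hasDerivAt_sqrt hz.ne').const_mul a
    have hl := (hasDerivAt_id z).const_mul ξ
    refine (hs.neg.sub hl).congr_deriv ?_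
    field_simp
  convert h1.exp using 1
  ring

lemma aux_erf_deriv (erf : ℝ → ℝ)
    (herf : ∀ x, erf x = 2 / Real.sqrt Real.pi * ∫ u in (0:ℝ)..x, Real.exp (-u ^ 2))
    (x : ℝ) :
    HasDerivAt erf (2 / Real.sqrt Real.pi * Real.exp (-x ^ 2)) x := by
  have hc : Continuous fun u : ℝ => Real.exp (-u ^ 2) := by continuity
  have h := ((hc.integral_hasStrictDerivAt 0 x).hasDerivAt).const_mul (2 / Real.sqrt Real.pi)
  have hfun : erf = fun x => 2 / Real.sqrt Real.pi * ∫ u in (0:ℝ)..x, Real.exp (-u ^ 2) :=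
    funext herf
  rw [hfun]
  exact h

lemma aux_erf_cont (erf : ℝ → ℝ)
    (herf : ∀ x, erf x = 2 / Real.sqrt Real.pi * ∫ u in (0:ℝ)..x, Real.exp (-u ^ 2)) :
    Continuous erf :=
  continuous_iff_continuousAt.2 fun x => (aux_erf_deriv erf herf x).continuousAt

lemma aux_Phi_deriv (a ξ : ℝ) (ha : 0 ≤ a) (hξ : 0 < ξ) (erf : ℝ → ℝ)
    (herf : ∀ x, erf x = 2 / Real.sqrt Real.pi * ∫ u in (0:ℝ)..x, Real.exp (-u ^ 2))
    {z : ℝ} (hz : 0 < z) :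
    HasDerivAt (fun z => -(Real.exp (-(a * Real.sqrt z) - ξ * z)) / ξ
        - Real.sqrt Real.pi * a / (2 * ξ * Real.sqrt ξ) * Real.exp ((a / (2 * Real.sqrt ξ)) ^ 2)
          * erf (a / (2 * Real.sqrt ξ) + Real.sqrt ξ * Real.sqrt z))
      (Real.exp (-(a * Real.sqrt z) - ξ * z)) z := by
  set s := Real.sqrt ξ with hs
  set d := a / (2 * s) with hd
  set t := Real.sqrt z with ht
  have hsne : s ≠ 0 := (Real.sqrt_pos.2 hξ).ne'
  have htpos : 0 < t := Real.sqrt_pos.2 hz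
  have hs2 : s ^ 2 = ξ := Real.sq_sqrt hξ.le
  have ht2 : t ^ 2 = z := Real.sq_sqrt hz.le
  have h1 : HasDerivAt (fun z : ℝ => -(Real.exp (-(a * Real.sqrt z) - ξ * z)) / ξ)
      ((a / (2 * t) + ξ) * Real.exp (-(a * t) - ξ * z) / ξ) z := by
    have := (aux_G_deriv a ξ hz).neg.div_const ξ
    refine this.congr_deriv ?_
    ring
  have hinner : HasDerivAt (fun z : ℝ => d + s * Real.sqrt z) (s * (1 / (2 * t))) z :=
    ((Real.hasDerivAt_sqrt hz.ne').const_mul s).const_add d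
  have h2 : HasDerivAt (fun z : ℝ => erf (d + s * Real.sqrt z))
      (2 / Real.sqrt Real.pi * Real.exp (-(d + s * t) ^ 2) * (s * (1 / (2 * t)))) z :=
    (aux_erf_deriv erf herf (d + s * t)).comp z hinner
  have h3 := h1.sub ((h2.const_mul
    (Real.sqrt Real.pi * a / (2 * ξ * s) * Real.exp (d ^ 2))))
  refine h3.congr_deriv ?_
  have hda : 2 * d * s = a := by rw [hd]; field_simp
  have key : Real.exp (d ^ 2) * Real.exp (-(d + s * t) ^ 2) = Real.exp (-(a * t) - ξ * z) := by
    rw [← Real.exp_add]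
    congr 1
    linear_combination (-t) * hda - t ^ 2 * hs2 - ξ * ht2
  have hπ : Real.sqrt Real.pi ≠ 0 := (Real.sqrt_pos.2 Real.pi_pos).ne'
  have coeff : Real.sqrt Real.pi * a / (2 * ξ * s) * Real.exp (d ^ 2) *
      (2 / Real.sqrt Real.pi * Real.exp (-(d + s * t) ^ 2) * (s * (1 / (2 * t)))) =
      a / (2 * ξ * t) * (Real.exp (d ^ 2) * Real.exp (-(d + s * t) ^ 2)) := by
    field_simp
  rw [coeff, key]
  field_simp
  ring

set_option maxHeartbeats 1600000 in
/-- Proposition 3: the closed-form approximated outage probability for the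
locally licensed (micro-operator) scenario with path-loss exponent `α = 4`
and non-negligible noise `ξ > 0`. -/
theorem stmt_4
    (α ζ lam ξ : ℝ) (hα : 2 < α) (hα4 : α = 4) (hζ : 0 ≤ ζ) (hlam : 0 ≤ lam)
    (hξ : 0 < ξ) (hζlam : 0 ≤ ζ * lam)
    (f : ℝ → ℝ)
    (hf : ∀ z > (0:ℝ), f z = (2 * ζ * lam / α * z ^ (2/α - 1) + ξ) *
      Real.exp (-(ζ * lam * z ^ (2/α)) - ξ * z))
    (n R θ β ϑ ρ : ℝ) (hn : 0 < n) (hR : 0 < R)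
    (hθ : θ = 2 ^ R - 1)
    (hβ : β = Real.sqrt (n / (2 * Real.pi)) * (2 ^ (2 * R) - 1) ^ (-(1:ℝ)/2))
    (hϑ : ϑ = θ + Real.sqrt (Real.pi / 2) / β)
    (hρ : ρ = θ - Real.sqrt (Real.pi / 2) / β)
    (hρ0 : 0 ≤ ρ)
    (W : ℝ → ℝ)
    (hW : ∀ t, W t = if t ≤ ρ then 1
      else if t < ϑ then 1/2 - β / Real.sqrt (2 * Real.pi) * (t - θ) else 0)
    (erf : ℝ → ℝ)
    (herf : ∀ x, erf x = 2 / Real.sqrt Real.pi * ∫ u in (0:ℝ)..x, Real.exp (-u^2)) :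
    ∫ z in Set.Ioi (0:ℝ), W z * f z =
      1 + β / (Real.sqrt (2 * Real.pi) * ξ) *
          (Real.exp (-(ζ * lam * Real.sqrt ϑ) - ξ * ϑ)
            - Real.exp (-(ζ * lam * Real.sqrt ρ) - ξ * ρ))
        - β * ζ * lam / (2 * Real.sqrt 2 * ξ ^ ((3:ℝ)/2)) *
            Real.exp ((ζ * lam)^2 / (4 * ξ)) *
            (erf (ζ * lam / (2 * Real.sqrt ξ) + Real.sqrt (ξ * ρ))
              - erf (ζ * lam / (2 * Real.sqrt ξ) + Real.sqrt (ξ * ϑ))) := by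
  subst hα4
  have herf' : ∀ x, erf x = 2 / Real.sqrt Real.pi * ∫ u in (0:ℝ)..x, Real.exp (-u ^ 2) := herf
  -- basic positivity facts
  have hπ : (0:ℝ) < Real.pi := Real.pi_pos
  have h2π : (0:ℝ) < Real.sqrt (2 * Real.pi) := Real.sqrt_pos.2 (by positivity)
  have hβpos : 0 < β := by
    rw [hβ]
    have h1 : (1:ℝ) < (2:ℝ) ^ (2 * R) :=
      (Real.one_lt_rpow_iff_of_pos (by norm_num)).2 (Or.inl ⟨one_lt_two, by linarith⟩)
    exact mul_pos (Real.sqrt_pos.2 (by positivity)) (Real.rpow_pos_of_pos (by linarith) _)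
  have hq : 0 < Real.sqrt (Real.pi / 2) / β :=
    div_pos (Real.sqrt_pos.2 (by positivity)) hβpos
  have hρϑ : ρ < ϑ := by rw [hρ, hϑ]; linarith
  have hϑ0 : 0 < ϑ := lt_of_le_of_lt hρ0 hρϑ
  set G : ℝ → ℝ := fun z => Real.exp (-(ζ * lam * Real.sqrt z) - ξ * z) with hGdef
  set c : ℝ := β / Real.sqrt (2 * Real.pi) with hcdef
  set lin : ℝ → ℝ := fun z => 1/2 - c * (z - θ) with hlindef
  set Φ : ℝ → ℝ := fun z => -(Real.exp (-(ζ * lam * Real.sqrt z) - ξ * z)) / ξ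
      - Real.sqrt Real.pi * (ζ * lam) / (2 * ξ * Real.sqrt ξ)
        * Real.exp ((ζ * lam / (2 * Real.sqrt ξ)) ^ 2)
        * erf (ζ * lam / (2 * Real.sqrt ξ) + Real.sqrt ξ * Real.sqrt z) with hΦdef
  have hc : 0 < c := div_pos hβpos h2π
  have hchalf : c * (Real.sqrt (Real.pi / 2) / β) = 1/2 := by
    have h1 : Real.sqrt (Real.pi / 2) = Real.sqrt (2 * Real.pi) / 2 := by
      have h2 : (Real.sqrt (2 * Real.pi) / 2) ^ 2 = Real.pi / 2 := by
        rw [div_pow, Real.sq_sqrt (by positivity)]; ring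
      rw [← h2, Real.sqrt_sq (by positivity)]
    rw [hcdef, h1]
    field_simp
  have hlinρ : lin ρ = 1 := by
    rw [hlindef]
    have : ρ - θ = -(Real.sqrt (Real.pi / 2) / β) := by rw [hρ]; ring
    simp only [this]
    rw [mul_neg]
    linarith
  have hlinϑ : lin ϑ = 0 := by
    rw [hlindef]
    have : ϑ - θ = Real.sqrt (Real.pi / 2) / β := by rw [hϑ]; ring
    simp only [this]
    linarith
  have hW1 : ∀ z, z ≤ ρ → W z = 1 := fun z hz => by rw [hW]; simp [hz]
  have hWlin : ∀ z, ρ < z → z ≤ ϑ → W z = lin z := by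
    intro z h1 h2
    rw [hW z, if_neg (not_le.2 h1)]
    rcases lt_or_eq_of_le h2 with h | h
    · rw [if_pos h, hlindef]
    · rw [if_neg (by rw [h]; exact lt_irrefl _), h, hlinϑ]
  have hWzero : ∀ z, ϑ < z → W z = 0 := by
    intro z h
    rw [hW z, if_neg (by push_neg; linarith), if_neg (by push_neg; linarith)]
  have hfG : ∀ z, 0 < z → f z = (ζ * lam / (2 * Real.sqrt z) + ξ) * G z := by
    intro z hz
    have hsz : (0:ℝ) < Real.sqrt z := Real.sqrt_pos.2 hz
    rw [hf z hz, show (2:ℝ)/4 - 1 = -(1/2) by norm_num, show (2:ℝ)/4 = 1/2 by norm_num,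
      Real.rpow_neg hz.le, ← Real.sqrt_eq_rpow, hGdef]
    congr 1
    field_simp
    ring
  -- integrability
  have hg1bound : ∀ z : ℝ, 0 < z →
      ‖(ζ * lam / (2 * Real.sqrt z) + ξ) * G z‖ ≤ ζ * lam / 2 * z ^ (-(1/2):ℝ) + ξ := by
    intro z hz
    have hsz : (0:ℝ) < Real.sqrt z := Real.sqrt_pos.2 hz
    have hcoef : 0 ≤ ζ * lam / (2 * Real.sqrt z) + ξ :=
      add_nonneg (div_nonneg hζlam (by positivity)) hξ.le
    have hG1 : G z ≤ 1 := by
      rw [hGdef]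
      refine Real.exp_le_one_iff.2 ?_
      have := mul_nonneg hζlam (Real.sqrt_nonneg z)
      nlinarith
    have hGpos : 0 < G z := Real.exp_pos _
    rw [Real.norm_eq_abs, abs_of_nonneg (mul_nonneg hcoef hGpos.le)]
    have heq : ζ * lam / (2 * Real.sqrt z) = ζ * lam / 2 * z ^ (-(1/2):ℝ) := by
      rw [Real.rpow_neg hz.le, ← Real.sqrt_eq_rpow]
      field_simp
    calc (ζ * lam / (2 * Real.sqrt z) + ξ) * G z
        ≤ (ζ * lam / (2 * Real.sqrt z) + ξ) * 1 := mul_le_mul_of_nonneg_left hG1 hcoef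
      _ = ζ * lam / 2 * z ^ (-(1/2):ℝ) + ξ := by rw [mul_one, heq]
  have hbnd : ∀ T : ℝ, 0 ≤ T →
      IntegrableOn (fun z => ζ * lam / 2 * z ^ (-(1/2):ℝ) + ξ) (Ioc 0 T) := by
    intro T hT
    have h1 : IntervalIntegrable (fun z : ℝ => ζ * lam / 2 * z ^ (-(1/2):ℝ) + ξ) volume 0 T :=
      ((intervalIntegral.intervalIntegrable_rpow' (by norm_num : (-1:ℝ) < -(1/2))).const_mul
        (ζ * lam / 2)).add intervalIntegrable_const
    exact (intervalIntegrable_iff_integrableOn_Ioc_of_le hT).1 h1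
  have hg1meas : ∀ s : Set ℝ, AEStronglyMeasurable
      (fun z => (ζ * lam / (2 * Real.sqrt z) + ξ) * G z) (volume.restrict s) := by
    intro s
    apply Measurable.aestronglyMeasurable
    rw [hGdef]
    fun_prop
  have hIone : IntervalIntegrable (fun z => W z * f z) volume 0 ρ := by
    rw [intervalIntegrable_iff_integrableOn_Ioc_of_le hρ0]
    have hint : IntegrableOn (fun z => (ζ * lam / (2 * Real.sqrt z) + ξ) * G z) (Ioc 0 ρ) := by
      refine (hbnd ρ hρ0).mono' (hg1meas _) ?_
      filter_upwards [ae_restrict_mem measurableSet_Ioc] with z hz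
      exact hg1bound z hz.1
    exact hint.congr_fun
      (fun z hz => by rw [hW1 z hz.2, hfG z hz.1, one_mul]) measurableSet_Ioc
  have hlin01 : ∀ z, ρ < z → z ≤ ϑ → 0 ≤ lin z ∧ lin z ≤ 1 := by
    intro z h1 h2
    have e1 : lin z - lin ϑ = c * (ϑ - z) := by rw [hlindef]; simp; ring
    have e2 : lin ρ - lin z = c * (z - ρ) := by rw [hlindef]; simp; ring
    constructor
    · nlinarith [mul_nonneg hc.le (sub_nonneg.2 h2)]
    · nlinarith [mul_nonneg hc.le (sub_nonneg.2 h1.le)]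
  have hItwo : IntervalIntegrable (fun z => W z * f z) volume ρ ϑ := by
    rw [intervalIntegrable_iff_integrableOn_Ioc_of_le hρϑ.le]
    have hint : IntegrableOn (fun z => lin z * ((ζ * lam / (2 * Real.sqrt z) + ξ) * G z))
        (Ioc ρ ϑ) := by
      refine (((hbnd ϑ hϑ0.le).mono_set (Ioc_subset_Ioc_left hρ0))).mono' ?_ ?_
      · apply Measurable.aestronglyMeasurable
        rw [hGdef, hlindef]
        fun_prop
      · filter_upwards [ae_restrict_mem measurableSet_Ioc] with z hz
        have hz0 : (0:ℝ) < z := lt_of_le_of_lt hρ0 hz.1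
        have hl := hlin01 z hz.1 hz.2
        calc ‖lin z * ((ζ * lam / (2 * Real.sqrt z) + ξ) * G z)‖
            = |lin z| * ‖(ζ * lam / (2 * Real.sqrt z) + ξ) * G z‖ := by
              rw [norm_mul, Real.norm_eq_abs]
          _ ≤ 1 * (ζ * lam / 2 * z ^ (-(1/2):ℝ) + ξ) := by
              apply mul_le_mul (by rw [abs_of_nonneg hl.1]; exact hl.2)
                (hg1bound z hz0) (norm_nonneg _) zero_le_one
          _ = ζ * lam / 2 * z ^ (-(1/2):ℝ) + ξ := one_mul _
    exact hint.congr_fun (fun z hz => by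
      rw [hWlin z hz.1 hz.2, hfG z (lt_of_le_of_lt hρ0 hz.1)]) measurableSet_Ioc
  -- continuity facts
  have hGcont : Continuous G := by rw [hGdef]; fun_prop
  have hΦcont : Continuous Φ := by
    rw [hΦdef]
    apply Continuous.sub
    · fun_prop
    · exact (continuous_const.mul ((aux_erf_cont erf herf').comp (by fun_prop)))
  -- Part 1
  have hpart1 : ∫ z in (0:ℝ)..ρ, W z * f z = 1 - G ρ := by
    have hftc := intervalIntegral.integral_eq_sub_of_hasDeriv_right_of_le hρ0
      (f := fun z => -(G z)) (f' := fun z => W z * f z)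
      (hGcont.neg.continuousOn)
      (fun x hx => by
        show HasDerivWithinAt (fun z => -(G z)) (W x * f x) (Ioi x) x
        have h := (aux_G_deriv (ζ * lam) ξ hx.1).neg
        have heq : W x * f x = (ζ * lam / (2 * Real.sqrt x) + ξ) * G x := by
          rw [hW1 x hx.2.le, hfG x hx.1, one_mul]
        rw [heq]
        exact (by rw [neg_neg] at h; exact h : HasDerivAt (fun z => -(G z))
          ((ζ * lam / (2 * Real.sqrt x) + ξ) * G x) x).hasDerivWithinAt)
      hIone
    rw [hftc, hGdef]
    simp
    ring
  -- Part 2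
  have hpart2 : ∫ z in ρ..ϑ, W z * f z = G ρ + c * (Φ ρ - Φ ϑ) := by
    have hftc := intervalIntegral.integral_eq_sub_of_hasDeriv_right_of_le hρϑ.le
      (f := fun z => -(lin z * G z) - c * Φ z) (f' := fun z => W z * f z)
      (((hlindef ▸ (by fun_prop : Continuous lin)).mul hGcont).neg.sub
        (continuous_const.mul hΦcont)).continuousOn
      (fun x hx => by
        show HasDerivWithinAt (fun z => -(lin z * G z) - c * Φ z) (W x * f x) (Ioi x) x
        have hx0 : (0:ℝ) < x := lt_of_le_of_lt hρ0 hx.1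
        have hlinD : HasDerivAt lin (-c) x := by
          rw [hlindef]
          have := (((hasDerivAt_id x).sub_const θ).const_mul c).const_sub (1/2:ℝ)
          simpa using this
        have hGD := aux_G_deriv (ζ * lam) ξ hx0
        have hΦD : HasDerivAt Φ (G x) x := by
          rw [hΦdef]
          exact aux_Phi_deriv (ζ * lam) ξ hζlam hξ erf herf' hx0
        have hcomb := (hlinD.mul hGD).neg.sub (hΦD.const_mul c)
        have heq : W x * f x = -(-c * G x + lin x *
            -((ζ * lam / (2 * Real.sqrt x) + ξ) * G x)) - c * G x := by
          rw [hWlin x hx.1 hx.2.le, hfG x hx0]; ring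
        rw [heq]
        exact hcomb.hasDerivWithinAt)
      hItwo
    rw [hftc]
    beta_reduce
    rw [hlinρ, hlinϑ]
    ring
  -- reduce the set integral to an interval integral
  have hIoc : IntegrableOn (fun z => W z * f z) (Ioc 0 ϑ) volume :=
    (intervalIntegrable_iff_integrableOn_Ioc_of_le hϑ0.le).1 (hIone.trans hItwo)
  have hIoi : IntegrableOn (fun z => W z * f z) (Ioi ϑ) volume := by
    refine (integrableOn_zero (μ := volume) (s := Ioi ϑ)).congr_fun (fun z hz => ?_) measurableSet_Ioi
    rw [hWzero z hz, zero_mul]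
  have hzero : ∫ z in Ioi ϑ, W z * f z = 0 := by
    rw [setIntegral_congr_fun measurableSet_Ioi
      (fun z hz => by simp only [hWzero z hz, zero_mul] : EqOn (fun z => W z * f z) (fun _ => (0:ℝ)) _)]
    simp
  have hsplit : (∫ z in Ioi (0:ℝ), W z * f z) = ∫ z in (0:ℝ)..ϑ, W z * f z := by
    have hU : Ioi (0:ℝ) = Ioc 0 ϑ ∪ Ioi ϑ := (Ioc_union_Ioi_eq_Ioi hϑ0.le).symm
    rw [hU, setIntegral_union (Ioc_disjoint_Ioi le_rfl) measurableSet_Ioi hIoc hIoi, hzero,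
      add_zero, intervalIntegral.integral_of_le hϑ0.le]
  rw [hsplit, ← intervalIntegral.integral_add_adjacent_intervals hIone hItwo, hpart1, hpart2]
  -- final algebra
  have hsqxr : Real.sqrt (ξ * ρ) = Real.sqrt ξ * Real.sqrt ρ := Real.sqrt_mul hξ.le ρ
  have hsqxt : Real.sqrt (ξ * ϑ) = Real.sqrt ξ * Real.sqrt ϑ := Real.sqrt_mul hξ.le ϑ
  have hexp : (ζ * lam / (2 * Real.sqrt ξ)) ^ 2 = (ζ * lam) ^ 2 / (4 * ξ) := by
    have h4 : (2 * Real.sqrt ξ) ^ 2 = 4 * ξ := by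
      rw [mul_pow, Real.sq_sqrt hξ.le]; norm_num
    rw [div_pow, h4]
  have h32 : ξ ^ ((3:ℝ)/2) = ξ * Real.sqrt ξ := by
    rw [show (3:ℝ)/2 = 1 + 1/2 by norm_num, Real.rpow_add hξ, Real.rpow_one,
      ← Real.sqrt_eq_rpow]
  have h2πs : Real.sqrt (2 * Real.pi) = Real.sqrt 2 * Real.sqrt Real.pi :=
    Real.sqrt_mul (by norm_num) Real.pi
  have hsπ : (0:ℝ) < Real.sqrt Real.pi := Real.sqrt_pos.2 hπ
  have hs2 : (0:ℝ) < Real.sqrt 2 := Real.sqrt_pos.2 (by norm_num)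
  have hsξ : (0:ℝ) < Real.sqrt ξ := Real.sqrt_pos.2 hξ
  rw [hsqxr, hsqxt, hΦdef, hcdef, hGdef, hexp, h32, h2πs]
  field_simp
  ring
end

section
/- The function g is strictly increasing on (0, ∞). (The monotonicity of the argument of the Q-function in the finite-blocklength outage expression, asserted in Appendix A.) -/
open MeasureTheory Set Real

noncomputable def Faux10 (n R : ℝ) : ℝ → ℝ :=
  fun t => Real.sqrt n * (Real.log (1 + t) - R * Real.log 2) * (1 + t) / Real.sqrt (t ^ 2 + 2 * t)

lemma Faux10_hasDerivAt (n R : ℝ) (t : ℝ) (ht : 0 < t) :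
    HasDerivAt (Faux10 n R)
      (Real.sqrt n * (t ^ 2 + 2 * t - (Real.log (1 + t) - R * Real.log 2)) /
        (Real.sqrt (t ^ 2 + 2 * t)) ^ 3) t := by
  have h1t : (0:ℝ) < 1 + t := by linarith
  have hq : (0:ℝ) < t ^ 2 + 2 * t := by nlinarith
  have hS : 0 < Real.sqrt (t ^ 2 + 2 * t) := Real.sqrt_pos.mpr hq
  have hS2 : (Real.sqrt (t ^ 2 + 2 * t)) ^ 2 = t ^ 2 + 2 * t := Real.sq_sqrt hq.le
  have hlog : HasDerivAt (fun t : ℝ => Real.log (1 + t)) (1 / (1 + t)) t := by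
    simpa using (((hasDerivAt_id t).const_add 1).log h1t.ne')
  have hM : HasDerivAt (fun t : ℝ => Real.sqrt n * (Real.log (1 + t) - R * Real.log 2) * (1 + t))
      ((Real.sqrt n * (1 / (1 + t))) * (1 + t)
        + (Real.sqrt n * (Real.log (1 + t) - R * Real.log 2)) * 1) t :=
    (((hlog.sub_const (R * Real.log 2)).const_mul (Real.sqrt n)).mul
      ((hasDerivAt_id t).const_add 1))
  have hq' : HasDerivAt (fun t : ℝ => t ^ 2 + 2 * t) (2 * t + 2) t := by
    have := (hasDerivAt_pow 2 t).add ((hasDerivAt_id t).const_mul 2)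
    exact this.congr_deriv (by norm_num)
  have hSd : HasDerivAt (fun t : ℝ => Real.sqrt (t ^ 2 + 2 * t))
      ((2 * t + 2) / (2 * Real.sqrt (t ^ 2 + 2 * t))) t := hq'.sqrt hq.ne'
  have hF := hM.div hSd hS.ne'
  refine hF.congr_deriv ?_
  symm
  set S := Real.sqrt (t ^ 2 + 2 * t) with hSdef
  field_simp
  linear_combination (-Real.sqrt n * (1 + (Real.log (1 + t) - R * Real.log 2))) * hS2

lemma Faux10_eq (n R : ℝ) (V g : ℝ → ℝ)
    (hV : ∀ t, V t = (1 - (1 + t) ^ (-(2:ℝ))) * (Real.logb 2 (Real.exp 1))^2)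
    (hg : ∀ t > (0:ℝ), g t = Real.sqrt n * (Real.logb 2 (1 + t) - R) / Real.sqrt (V t))
    (t : ℝ) (ht : 0 < t) : g t = Faux10 n R t := by
  have h1t : (0:ℝ) < 1 + t := by linarith
  have hq : (0:ℝ) < t ^ 2 + 2 * t := by nlinarith
  have hL : (0:ℝ) < Real.log 2 := Real.log_pos one_lt_two
  have hVt : V t = (t ^ 2 + 2 * t) / ((1 + t) * Real.log 2) ^ 2 := by
    rw [hV, Real.logb, Real.log_exp]
    rw [show (-(2:ℝ)) = ((-2 : ℤ) : ℝ) by norm_num, Real.rpow_intCast]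
    rw [show ((1 + t) : ℝ) ^ (-2 : ℤ) = ((1 + t) ^ 2)⁻¹ by
      rw [zpow_neg]; norm_cast]
    field_simp
    ring
  have hsqrtV : Real.sqrt (V t) = Real.sqrt (t ^ 2 + 2 * t) / ((1 + t) * Real.log 2) := by
    rw [hVt, Real.sqrt_div hq.le, Real.sqrt_sq (by positivity)]
  have hS : 0 < Real.sqrt (t ^ 2 + 2 * t) := Real.sqrt_pos.mpr hq
  rw [hg t ht, hsqrtV, Faux10, Real.logb]
  field_simp

/-- The argument `g` of the Q-function in the finite-blocklength outage
expression is strictly increasing on `(0, ∞)` (Appendix A). -/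
theorem stmt_10
    (n R : ℝ) (hn : 0 < n) (hR : 0 < R)
    (V g : ℝ → ℝ)
    (hV : ∀ t, V t = (1 - (1 + t) ^ (-(2:ℝ))) * (Real.logb 2 (Real.exp 1))^2)
    (hg : ∀ t > (0:ℝ), g t = Real.sqrt n * (Real.logb 2 (1 + t) - R) / Real.sqrt (V t)) :
    StrictMonoOn g (Set.Ioi (0:ℝ)) := by
  have hmono : StrictMonoOn (Faux10 n R) (Set.Ioi (0:ℝ)) := by
    apply strictMonoOn_of_deriv_pos (convex_Ioi 0)
    · intro x hx
      exact (Faux10_hasDerivAt n R x hx).differentiableAt.continuousAt.continuousWithinAt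
    · intro x hx
      rw [interior_Ioi] at hx
      rw [(Faux10_hasDerivAt n R x hx).deriv]
      have h1x : (0:ℝ) < 1 + x := by linarith [mem_Ioi.mp hx]
      have hx0 : (0:ℝ) < x := hx
      have hlog : Real.log (1 + x) ≤ x := by
        have := Real.log_le_sub_one_of_pos h1x
        linarith
      have hL : (0:ℝ) < Real.log 2 := Real.log_pos one_lt_two
      have hnum : 0 < x ^ 2 + 2 * x - (Real.log (1 + x) - R * Real.log 2) := by
        nlinarith
      have hq : (0:ℝ) < x ^ 2 + 2 * x := by nlinarith
      have hS : 0 < Real.sqrt (x ^ 2 + 2 * x) := Real.sqrt_pos.mpr hq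
      have hn' : 0 < Real.sqrt n := Real.sqrt_pos.mpr hn
      positivity
  intro a ha b hb hab
  rw [Faux10_eq n R V g hV hg a ha, Faux10_eq n R V g hV hg b hb]
  exact hmono ha hb hab
end

section
/- Fix R > 0 and suppose ζ λ > 0 or ξ > 0. For each n > 0 let W_n be the piecewise-linear function with parameters β_n = √(n/(2π)) (2^{2R} − 1)^{−1/2}, ϑ_n = θ + √(π/2)/β_n, ρ_n = θ − √(π/2)/β_n, where θ = 2^R − 1. Then as n → ∞ the approximated outage probability converges to the classical outage probability: lim_{n→∞} ∫_0^∞ W_n(z) f(z) dz = F(2^R − 1) = 1 − exp(−ζλ (2^R − 1)^{2/α} − ξ (2^R − 1)). (In the large-blocklength limit the outage probability is expressed as Pr[SINR < γ_th] with SINR threshold γ_th = 2^R − 1.) -/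
open MeasureTheory Set Real Filter

/-- In the large-blocklength limit the approximated outage probability
converges to the classical outage probability `Pr[SINR < γ_th]` with SINR
threshold `γ_th = 2^R − 1`:
`lim_{n→∞} ∫_0^∞ W_n(z) f(z) dz = F(2^R − 1)`. -/
theorem stmt_12
    (α ζ lam ξ R : ℝ) (hα : 2 < α) (hζ : 0 ≤ ζ) (hlam : 0 ≤ lam) (hξ : 0 ≤ ξ)
    (hR : 0 < R) (hpos : 0 < ζ * lam ∨ 0 < ξ)
    (f : ℝ → ℝ)
    (hf : ∀ z > (0:ℝ), f z = (2 * ζ * lam / α * z ^ (2/α - 1) + ξ) *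
      Real.exp (-(ζ * lam * z ^ (2/α)) - ξ * z))
    (θ : ℝ) (hθ : θ = 2 ^ R - 1)
    (β ϑ ρ : ℝ → ℝ)
    (hβ : ∀ n > (0:ℝ), β n = Real.sqrt (n / (2 * Real.pi)) * (2 ^ (2 * R) - 1) ^ (-(1:ℝ)/2))
    (hϑ : ∀ n > (0:ℝ), ϑ n = θ + Real.sqrt (Real.pi / 2) / β n)
    (hρ : ∀ n > (0:ℝ), ρ n = θ - Real.sqrt (Real.pi / 2) / β n)
    (W : ℝ → ℝ → ℝ)
    (hW : ∀ n > (0:ℝ), ∀ t, W n t = if t ≤ ρ n then 1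
      else if t < ϑ n then 1/2 - β n / Real.sqrt (2 * Real.pi) * (t - θ) else 0) :
    Tendsto (fun n => ∫ z in Set.Ioi (0:ℝ), W n z * f z) atTop
      (nhds (1 - Real.exp (-(ζ * lam * (2 ^ R - 1) ^ (2/α)) - ξ * (2 ^ R - 1)))) := by
  have hα0 : (0:ℝ) < α := by linarith
  have hq0 : (0:ℝ) < 2/α := by positivity
  have hc0 : 0 ≤ ζ * lam := mul_nonneg hζ hlam
  -- the actual density and its antiderivative
  set E : ℝ → ℝ := fun z => Real.exp (-(ζ * lam * z ^ (2/α)) - ξ * z) with hEdef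
  set f₀ : ℝ → ℝ := fun z => (2 * ζ * lam / α * z ^ (2/α - 1) + ξ) * E z with hf₀def
  have hpowc : Continuous fun z : ℝ => z ^ (2/α) := by
    rw [continuous_iff_continuousAt]
    intro x
    exact Real.continuousAt_rpow_const x _ (Or.inr hq0.le)
  have hEcont : Continuous E := by
    apply Real.continuous_exp.comp
    exact ((continuous_const.mul hpowc).neg.sub (continuous_const.mul continuous_id))
  have hf₀nn : ∀ z : ℝ, 0 ≤ z → 0 ≤ f₀ z := by
    intro z hz
    have h1 : 0 ≤ z ^ (2/α - 1) := Real.rpow_nonneg hz _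
    have h2 : 0 ≤ 2 * ζ * lam / α := by
      apply div_nonneg _ hα0.le; nlinarith
    exact mul_nonneg (add_nonneg (mul_nonneg h2 h1) hξ) (Real.exp_pos _).le
  have hf₀meas : Measurable f₀ := by
    apply Measurable.mul _ hEcont.measurable
    exact ((measurable_id.pow_const _).const_mul _).add measurable_const
  have hII : ∀ t : ℝ, IntervalIntegrable f₀ volume 0 t := by
    intro t
    have h1 : IntervalIntegrable
        (fun z : ℝ => 2 * ζ * lam / α * z ^ (2/α - 1) + ξ) volume 0 t :=
      ((intervalIntegral.intervalIntegrable_rpow' (by linarith)).const_mul _).add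
        intervalIntegrable_const
    exact h1.mul_continuousOn hEcont.continuousOn
  have hIntOn : ∀ t : ℝ, 0 ≤ t → IntegrableOn f₀ (Ioc 0 t) :=
    fun t ht => (intervalIntegrable_iff_integrableOn_Ioc_of_le ht).mp (hII t)
  -- FTC computation of the partial integrals
  have key : ∀ t : ℝ, 0 ≤ t → ∫ z in Ioc (0:ℝ) t, f₀ z = 1 - E t := by
    intro t ht
    have hE0 : E 0 = 1 := by
      simp [hEdef, Real.zero_rpow (ne_of_gt hq0)]
    have h1 : ∫ z in (0:ℝ)..t, f₀ z = (1 - E t) - (1 - E 0) := by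
      apply intervalIntegral.integral_eq_sub_of_hasDeriv_right_of_le ht
      · exact (continuous_const.sub hEcont).continuousOn
      · intro x hx
        have hx0 : (0:ℝ) < x := hx.1
        have hd1 : HasDerivAt (fun z : ℝ => z ^ (2/α)) (2/α * x ^ (2/α - 1)) x :=
          Real.hasDerivAt_rpow_const (Or.inl hx0.ne')
        have hd2 : HasDerivAt (fun z : ℝ => -(ζ * lam * z ^ (2/α)) - ξ * z)
            (-(ζ * lam * (2/α * x ^ (2/α - 1))) - ξ) x := by
          have := ((hd1.const_mul (ζ * lam)).neg).sub ((hasDerivAt_id x).const_mul ξ)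
          simp only [mul_one] at this
          exact this
        have hd3 := hd2.exp
        have hd4 := (hasDerivAt_const x (1:ℝ)).sub hd3
        have hval : f₀ x = 1 * 0 -
            Real.exp (-(ζ * lam * x ^ (2/α)) - ξ * x) *
              (-(ζ * lam * (2/α * x ^ (2/α - 1))) - ξ) := by
          simp only [hf₀def, hEdef]
          field_simp
          ring
        have hd5 : HasDerivAt (fun z => 1 - E z) (f₀ x) x := by
          rw [hval, one_mul]
          exact hd4
        exact hd5.hasDerivWithinAt
      · exact hII t
    rw [intervalIntegral.integral_of_le ht] at h1
    rw [h1, hE0]; ring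
  -- positivity of various constants
  have hθpos : 0 < θ := by
    rw [hθ]
    have : (1:ℝ) < 2 ^ R := by
      rw [Real.one_lt_rpow_iff_of_pos (by norm_num)]
      exact Or.inl ⟨one_lt_two, hR⟩
    linarith
  have hk2 : (0:ℝ) < ((2:ℝ) ^ (2 * R) - 1) ^ (-(1:ℝ)/2) := by
    apply Real.rpow_pos_of_pos
    have : (1:ℝ) < 2 ^ (2 * R) := by
      rw [Real.one_lt_rpow_iff_of_pos (by norm_num)]
      exact Or.inl ⟨one_lt_two, by linarith⟩
    linarith
  have hβpos : ∀ n : ℝ, 0 < n → 0 < β n := by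
    intro n hn
    rw [hβ n hn]
    have : 0 < Real.sqrt (n / (2 * Real.pi)) :=
      Real.sqrt_pos.mpr (by positivity)
    positivity
  -- the half constant
  have hhalf : Real.sqrt (Real.pi / 2) / Real.sqrt (2 * Real.pi) = 1/2 := by
    rw [← Real.sqrt_div (by positivity)]
    have : Real.pi / 2 / (2 * Real.pi) = (1/2)^2 := by
      field_simp
    rw [this, Real.sqrt_sq (by norm_num)]
  -- β tends to infinity, so d n := √(π/2)/β n tends to 0
  have hβtop : Tendsto β atTop atTop := by
    have h1 : Tendsto (fun n : ℝ =>
        Real.sqrt (n / (2 * Real.pi)) * ((2:ℝ) ^ (2 * R) - 1) ^ (-(1:ℝ)/2)) atTop atTop := by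
      apply Tendsto.atTop_mul_const hk2
      have h2 : Tendsto (fun x : ℝ => Real.sqrt x) atTop atTop := by
        simp only [Real.sqrt_eq_rpow]
        exact tendsto_rpow_atTop (by norm_num)
      exact h2.comp (tendsto_id.atTop_div_const (by positivity))
    apply h1.congr'
    filter_upwards [eventually_gt_atTop (0:ℝ)] with n hn
    exact (hβ n hn).symm
  have hdtend : Tendsto (fun n => Real.sqrt (Real.pi / 2) / β n) atTop (nhds 0) :=
    tendsto_const_nhds.div_atTop hβtop
  have hρtend : Tendsto ρ atTop (nhds θ) := by
    have h1 : Tendsto (fun n => θ - Real.sqrt (Real.pi / 2) / β n) atTop (nhds (θ - 0)) :=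
      tendsto_const_nhds.sub hdtend
    rw [sub_zero] at h1
    apply h1.congr'
    filter_upwards [eventually_gt_atTop (0:ℝ)] with n hn
    exact (hρ n hn).symm
  have hϑtend : Tendsto ϑ atTop (nhds θ) := by
    have h1 : Tendsto (fun n => θ + Real.sqrt (Real.pi / 2) / β n) atTop (nhds (θ + 0)) :=
      tendsto_const_nhds.add hdtend
    rw [add_zero] at h1
    apply h1.congr'
    filter_upwards [eventually_gt_atTop (0:ℝ)] with n hn
    exact (hϑ n hn).symm
  -- the limit value
  have htarget : 1 - Real.exp (-(ζ * lam * (2 ^ R - 1) ^ (2/α)) - ξ * (2 ^ R - 1))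
      = 1 - E θ := by rw [hθ]
  rw [htarget]
  have hLtend : Tendsto (fun n => 1 - E (ρ n)) atTop (nhds (1 - E θ)) :=
    tendsto_const_nhds.sub ((hEcont.tendsto θ).comp hρtend)
  have hUtend : Tendsto (fun n => 1 - E (ϑ n)) atTop (nhds (1 - E θ)) :=
    tendsto_const_nhds.sub ((hEcont.tendsto θ).comp hϑtend)
  have hbound : ∀ᶠ n in atTop,
      1 - E (ρ n) ≤ (∫ z in Set.Ioi (0:ℝ), W n z * f z) ∧
        (∫ z in Set.Ioi (0:ℝ), W n z * f z) ≤ 1 - E (ϑ n) := by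
    filter_upwards [eventually_gt_atTop (0:ℝ),
      hdtend.eventually_lt_const hθpos] with n hn hdθ
    have hβn : 0 < β n := hβpos n hn
    set d : ℝ := Real.sqrt (Real.pi / 2) / β n with hddef
    have hdpos : 0 < d := div_pos (Real.sqrt_pos.mpr (by positivity)) hβn
    have hρn : ρ n = θ - d := hρ n hn
    have hϑn : ϑ n = θ + d := hϑ n hn
    have hρpos : 0 < ρ n := by rw [hρn]; linarith
    have hϑpos : 0 < ϑ n := by rw [hϑn]; linarith
    have hρϑ : ρ n < ϑ n := by rw [hρn, hϑn]; linarith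
    have hkd : β n / Real.sqrt (2 * Real.pi) * d = 1/2 := by
      have hs : (0:ℝ) < Real.sqrt (2 * Real.pi) := Real.sqrt_pos.mpr (by positivity)
      rw [hddef, ← hhalf]
      field_simp
    -- bounds on W n
    have hW0 : ∀ t, 0 ≤ W n t := by
      intro t
      rw [hW n hn t]
      split_ifs with h1 h2
      · norm_num
      · push_neg at h1
        rw [hρn] at h1
        rw [hϑn] at h2
        have hlt : β n / Real.sqrt (2 * Real.pi) * (t - θ) <
            β n / Real.sqrt (2 * Real.pi) * d := by
          apply mul_lt_mul_of_pos_left _ (by positivity)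
          linarith
        rw [hkd] at hlt
        linarith
      · exact le_refl 0
    have hW1 : ∀ t, W n t ≤ 1 := by
      intro t
      rw [hW n hn t]
      split_ifs with h1 h2
      · exact le_refl 1
      · push_neg at h1
        rw [hρn] at h1
        have hlt : -(β n / Real.sqrt (2 * Real.pi) * d) <
            β n / Real.sqrt (2 * Real.pi) * (t - θ) := by
          have := mul_lt_mul_of_pos_left (show -d < t - θ by linarith)
            (show (0:ℝ) < β n / Real.sqrt (2 * Real.pi) by positivity)
          linarith [this]
        rw [hkd] at hlt
        linarith
      · norm_num
    have hWone : ∀ t ∈ Ioc (0:ℝ) (ρ n), W n t = 1 := by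
      intro t ht
      rw [hW n hn t, if_pos ht.2]
    have hWzero : ∀ t ∈ Ioi (ϑ n), W n t = 0 := by
      intro t ht
      rw [hW n hn t, if_neg (by simp only [mem_Ioi] at ht; linarith),
        if_neg (by simp only [mem_Ioi] at ht; exact not_lt.mpr (le_of_lt ht))]
    -- measurability of W n
    have hWmeas : Measurable (W n) := by
      have hWe : W n = fun t => if t ≤ ρ n then 1
          else if t < ϑ n then 1/2 - β n / Real.sqrt (2 * Real.pi) * (t - θ) else 0 :=
        funext (hW n hn)
      rw [hWe]
      apply Measurable.ite (measurableSet_le measurable_id measurable_const)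
        measurable_const
      apply Measurable.ite (measurableSet_lt measurable_id measurable_const)
        _ measurable_const
      exact measurable_const.sub ((measurable_id.sub_const θ).const_mul _)
    -- rewrite f as f₀ on the domain
    have e1 : (∫ z in Set.Ioi (0:ℝ), W n z * f z)
        = ∫ z in Set.Ioi (0:ℝ), W n z * f₀ z := by
      apply setIntegral_congr_fun measurableSet_Ioi
      intro z hz
      show W n z * f z = W n z * f₀ z
      rw [hf z hz, hf₀def, hEdef]
    -- integrability of W n * f₀ on Ioc 0 (ϑ n)
    have hf₀i : IntegrableOn f₀ (Ioc 0 (ϑ n)) := hIntOn _ hϑpos.le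
    have hWfi : IntegrableOn (fun z => W n z * f₀ z) (Ioc 0 (ϑ n)) := by
      apply Integrable.mono hf₀i ((hWmeas.mul hf₀meas).aestronglyMeasurable)
      filter_upwards [ae_restrict_mem measurableSet_Ioc] with z hz
      rw [Real.norm_eq_abs, Real.norm_eq_abs, Pi.mul_apply,
        abs_of_nonneg (mul_nonneg (hW0 z) (hf₀nn z hz.1.le)), abs_of_nonneg (hf₀nn z hz.1.le)]
      exact mul_le_of_le_one_left (hf₀nn z hz.1.le) (hW1 z)
    -- restrict the integral to Ioc 0 (ϑ n)
    have hWfi' : IntegrableOn (fun z => W n z * f₀ z) (Ioi (ϑ n)) := by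
      apply IntegrableOn.congr_fun (integrableOn_zero) _ measurableSet_Ioi
      intro z hz
      show (0:ℝ) = W n z * f₀ z
      rw [hWzero z hz, zero_mul]
    have e2 : (∫ z in Set.Ioi (0:ℝ), W n z * f₀ z)
        = ∫ z in Ioc (0:ℝ) (ϑ n), W n z * f₀ z := by
      rw [← Ioc_union_Ioi_eq_Ioi hϑpos.le,
        setIntegral_union Ioc_disjoint_Ioi_same measurableSet_Ioi hWfi hWfi']
      have : (∫ z in Set.Ioi (ϑ n), W n z * f₀ z) = 0 := by
        have := setIntegral_congr_fun (μ := volume) (measurableSet_Ioi (a := ϑ n))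
          (f := fun z => W n z * f₀ z) (g := fun _ => (0:ℝ))
          (fun z hz => by show W n z * f₀ z = (0:ℝ); rw [hWzero z hz, zero_mul])
        simpa using this
      rw [this, add_zero]
    rw [e1, e2]
    -- upper bound
    have hub : (∫ z in Ioc (0:ℝ) (ϑ n), W n z * f₀ z) ≤ 1 - E (ϑ n) := by
      rw [← key (ϑ n) hϑpos.le]
      apply setIntegral_mono_on hWfi hf₀i measurableSet_Ioc
      intro z hz
      exact mul_le_of_le_one_left (hf₀nn z hz.1.le) (hW1 z)
    -- lower bound
    have hlb : 1 - E (ρ n) ≤ ∫ z in Ioc (0:ℝ) (ϑ n), W n z * f₀ z := by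
      rw [← Ioc_union_Ioc_eq_Ioc hρpos.le hρϑ.le,
        setIntegral_union (Ioc_disjoint_Ioc_of_le le_rfl) measurableSet_Ioc
          (hWfi.mono_set (Ioc_subset_Ioc_right hρϑ.le))
          (hWfi.mono_set (Ioc_subset_Ioc_left hρpos.le))]
      have h1 : (∫ z in Ioc (0:ℝ) (ρ n), W n z * f₀ z) = 1 - E (ρ n) := by
        have he := setIntegral_congr_fun (μ := volume) (measurableSet_Ioc (a := (0:ℝ)) (b := ρ n))
          (f := fun z => W n z * f₀ z) (g := f₀)
          (fun z hz => by show W n z * f₀ z = f₀ z; rw [hWone z hz, one_mul])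
        rw [he]
        exact key (ρ n) hρpos.le
      have h2 : 0 ≤ ∫ z in Ioc (ρ n) (ϑ n), W n z * f₀ z := by
        apply setIntegral_nonneg measurableSet_Ioc
        intro z hz
        exact mul_nonneg (hW0 z) (hf₀nn z (hρpos.trans hz.1).le)
      rw [h1]
      linarith
    exact ⟨hlb, hub⟩
  exact tendsto_of_tendsto_of_tendsto_of_le_of_le' hLtend hUtend
    (hbound.mono fun n h => h.1) (hbound.mono fun n h => h.2)
end

section
/- Fix α > 2, ζ > 0, ξ ≥ 0, n > 0 and R > 0, and assume ρ ≥ 0. Write f(z | λ) for the SINR PDF with density parameter λ. Then the approximated outage probability is nondecreasing in the network density: for all 0 < λ₁ ≤ λ₂, ∫_0^∞ W(z) f(z | λ₁) dz ≤ ∫_0^∞ W(z) f(z | λ₂) dz. (As the network density increases, the outage probability increases.) -/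
open MeasureTheory Set Real

/-- The approximated outage probability is nondecreasing in the network
density: for `0 < λ₁ ≤ λ₂`, `∫_0^∞ W(z) f(z|λ₁) dz ≤ ∫_0^∞ W(z) f(z|λ₂) dz`. -/
theorem stmt_13
    (α ζ ξ : ℝ) (hα : 2 < α) (hζ : 0 < ζ) (hξ : 0 ≤ ξ)
    (f : ℝ → ℝ → ℝ)
    (hf : ∀ lam : ℝ, ∀ z > (0:ℝ), f lam z = (2 * ζ * lam / α * z ^ (2/α - 1) + ξ) *
      Real.exp (-(ζ * lam * z ^ (2/α)) - ξ * z))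
    (n R θ β ϑ ρ : ℝ) (hn : 0 < n) (hR : 0 < R)
    (hθ : θ = 2 ^ R - 1)
    (hβ : β = Real.sqrt (n / (2 * Real.pi)) * (2 ^ (2 * R) - 1) ^ (-(1:ℝ)/2))
    (hϑ : ϑ = θ + Real.sqrt (Real.pi / 2) / β)
    (hρ : ρ = θ - Real.sqrt (Real.pi / 2) / β)
    (hρ0 : 0 ≤ ρ)
    (W : ℝ → ℝ)
    (hW : ∀ t, W t = if t ≤ ρ then 1
      else if t < ϑ then 1/2 - β / Real.sqrt (2 * Real.pi) * (t - θ) else 0) :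
    ∀ lam₁ lam₂ : ℝ, 0 < lam₁ → lam₁ ≤ lam₂ →
      ∫ z in Set.Ioi (0:ℝ), W z * f lam₁ z ≤ ∫ z in Set.Ioi (0:ℝ), W z * f lam₂ z := by
  have hπ : (0:ℝ) < Real.pi := Real.pi_pos
  have hα0 : (0:ℝ) < α := by linarith
  have hp0 : (0:ℝ) < 2/α := by positivity
  have hβ0 : (0:ℝ) < β := by
    rw [hβ]
    apply mul_pos (Real.sqrt_pos.2 (by positivity))
    apply Real.rpow_pos_of_pos
    have : (1:ℝ) < (2:ℝ) ^ (2*R) :=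
      (Real.one_lt_rpow_iff_of_pos (by norm_num)).2 (Or.inl ⟨by norm_num, by linarith⟩)
    linarith
  have hs0 : (0:ℝ) < Real.sqrt (Real.pi / 2) := Real.sqrt_pos.2 (by positivity)
  have hsqrt : Real.sqrt (2 * Real.pi) = 2 * Real.sqrt (Real.pi / 2) := by
    rw [show 2 * Real.pi = 4 * (Real.pi / 2) by ring,
      show (4:ℝ) = 2^2 by norm_num, Real.sqrt_mul (by positivity),
      Real.sqrt_sq (by norm_num)]
  set c : ℝ := β / Real.sqrt (2 * Real.pi) with hc_def
  have hc : 0 < c := div_pos hβ0 (by rw [hsqrt]; positivity)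
  have hcϑ : c * (ϑ - θ) = 1/2 := by
    rw [hc_def, hϑ, hsqrt]
    field_simp
    ring
  have hcρ : c * (ρ - θ) = -(1/2) := by
    rw [hc_def, hρ, hsqrt]
    field_simp
    ring
  have hρϑ : ρ < ϑ := by
    rw [hρ, hϑ]
    have : 0 < Real.sqrt (Real.pi / 2) / β := div_pos hs0 hβ0
    linarith
  have hϑ0 : (0:ℝ) < ϑ := lt_of_le_of_lt hρ0 hρϑ
  -- continuity of the survival function
  have hGcont : ∀ lam : ℝ,
      Continuous fun z : ℝ => Real.exp (-(ζ * lam * z ^ (2/α)) - ξ * z) := by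
    intro lam
    have h1 : Continuous fun z : ℝ => z ^ (2/α) := by
      rw [continuous_iff_continuousAt]
      intro x
      exact Real.continuousAt_rpow_const x _ (Or.inr hp0.le)
    exact Real.continuous_exp.comp
      (((continuous_const.mul h1).neg).sub (continuous_const.mul continuous_id))
  -- the key closed form
  have key : ∀ lam : ℝ, 0 < lam →
      ∫ z in Set.Ioi (0:ℝ), W z * f lam z
        = 1 - c * ∫ z in ρ..ϑ, Real.exp (-(ζ * lam * z ^ (2/α)) - ξ * z) := by
    intro lam hlam
    set G : ℝ → ℝ := fun z => Real.exp (-(ζ * lam * z ^ (2/α)) - ξ * z) with hG_def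
    set g : ℝ → ℝ := fun z =>
      (2 * ζ * lam / α * z ^ (2/α - 1) + ξ) * Real.exp (-(ζ * lam * z ^ (2/α)) - ξ * z)
      with hg_def
    have hGc : Continuous G := hGcont lam
    have hG0 : G 0 = 1 := by
      simp [hG_def, Real.zero_rpow hp0.ne']
    -- derivative of G
    have hGderiv : ∀ z : ℝ, 0 < z → HasDerivAt G (-(g z)) z := by
      intro z hz
      have h1 : HasDerivAt (fun z : ℝ => z ^ (2/α)) (2/α * z ^ (2/α - 1)) z :=
        Real.hasDerivAt_rpow_const (Or.inl hz.ne')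
      have hxz : HasDerivAt (fun z : ℝ => ξ * z) ξ z := by
        simpa using HasDerivAt.const_mul ξ (hasDerivAt_id z)
      have h2 : HasDerivAt (fun z : ℝ => -(ζ * lam * z ^ (2/α)) - ξ * z)
          (-(ζ * lam * (2/α * z ^ (2/α - 1))) - ξ) z :=
        ((HasDerivAt.const_mul (ζ * lam) h1).neg).sub hxz
      have h3 := h2.exp
      convert h3 using 1
      simp only [hg_def]
      ring
    -- continuity of g away from 0
    have hgcont : ∀ s : Set ℝ, (∀ x ∈ s, x ≠ 0) → ContinuousOn g s := by
      intro s hs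
      have h1 : ContinuousOn (fun z : ℝ => z ^ (2/α - 1)) s := fun x hx =>
        (Real.continuousAt_rpow_const x _ (Or.inl (hs x hx))).continuousWithinAt
      exact (((continuousOn_const.mul h1).add continuousOn_const)).mul hGc.continuousOn
    -- integrability of g near 0
    have hgint : ∀ b : ℝ, IntegrableOn g (Ioc 0 b) := by
      intro b
      rcases le_or_gt b 0 with hb | hb
      · rw [Ioc_eq_empty (by exact fun h => absurd (lt_of_lt_of_le h hb) (lt_irrefl 0))]
        exact integrableOn_empty
      · have hmaj : IntegrableOn (fun z : ℝ => 2 * ζ * lam / α * z ^ (2/α - 1) + ξ)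
            (Ioc 0 b) := by
          have h1 : IntervalIntegrable (fun x : ℝ => x ^ (2/α - 1)) volume 0 b :=
            intervalIntegral.intervalIntegrable_rpow' (by linarith)
          have h2 := (h1.const_mul (2 * ζ * lam / α)).add
            (intervalIntegrable_const (c := ξ))
          rwa [intervalIntegrable_iff_integrableOn_Ioc_of_le hb.le] at h2
        refine Integrable.mono hmaj
          ((hgcont _ (fun x hx => ne_of_gt hx.1)).aestronglyMeasurable measurableSet_Ioc) ?_
        filter_upwards [ae_restrict_mem measurableSet_Ioc] with z hz
        have hz0 : 0 < z := hz.1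
        have hzp : 0 ≤ z ^ (2/α - 1) := Real.rpow_nonneg hz0.le _
        have hA : 0 ≤ 2 * ζ * lam / α * z ^ (2/α - 1) + ξ := by positivity
        have hzq : 0 ≤ z ^ (2/α) := Real.rpow_nonneg hz0.le _
        have hexp : Real.exp (-(ζ * lam * z ^ (2/α)) - ξ * z) ≤ 1 := by
          rw [Real.exp_le_one_iff]
          have h1 : 0 ≤ ζ * lam * z ^ (2/α) := by positivity
          have h2 : 0 ≤ ξ * z := mul_nonneg hξ hz0.le
          linarith
        have hgz : 0 ≤ g z := mul_nonneg hA (Real.exp_pos _).le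
        rw [Real.norm_eq_abs, Real.norm_eq_abs, abs_of_nonneg hgz, abs_of_nonneg hA]
        calc g z ≤ (2 * ζ * lam / α * z ^ (2/α - 1) + ξ) * 1 :=
              mul_le_mul_of_nonneg_left hexp hA
          _ = _ := mul_one _
    -- first piece : ∫_{(0,ρ]} g = 1 - G ρ
    have hI1 : ∫ z in Ioc (0:ℝ) ρ, g z = 1 - G ρ := by
      have hd : ∀ x ∈ Ioo (0:ℝ) ρ, HasDerivWithinAt (fun z => -G z) (g x) (Ioi x) x := by
        intro x hx
        exact (by have h := (hGderiv x hx.1).neg; rw [neg_neg] at h; exact h : HasDerivAt (fun z => -G z) (g x) x)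
          |>.hasDerivWithinAt
      have hint : IntervalIntegrable g volume 0 ρ :=
        (intervalIntegrable_iff_integrableOn_Ioc_of_le hρ0).2 (hgint ρ)
      have := intervalIntegral.integral_eq_sub_of_hasDeriv_right_of_le hρ0
        (hGc.neg.continuousOn) hd hint
      rw [intervalIntegral.integral_of_le hρ0] at this
      rw [this]; simp only [Pi.neg_apply, hG0]
      ring
    -- second piece
    have hlin01 : ∀ x ∈ Ioc ρ ϑ, 0 ≤ 1/2 - c * (x - θ) ∧ 1/2 - c * (x - θ) ≤ 1 := by
      intro x hx
      constructor
      · have : c * (x - θ) ≤ c * (ϑ - θ) :=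
          mul_le_mul_of_nonneg_left (by linarith [hx.2]) hc.le
        rw [hcϑ] at this; linarith
      · have : c * (ρ - θ) ≤ c * (x - θ) :=
          mul_le_mul_of_nonneg_left (by linarith [hx.1.le]) hc.le
        rw [hcρ] at this; linarith
    have hlin_int : IntegrableOn (fun z : ℝ => (1/2 - c * (z - θ)) * g z) (Ioc ρ ϑ) := by
      have hg' : IntegrableOn g (Ioc ρ ϑ) := (hgint ϑ).mono_set (Ioc_subset_Ioc_left hρ0)
      refine Integrable.mono hg' ?_ ?_
      · exact ((continuousOn_const.sub (continuousOn_const.mul (continuousOn_id.sub continuousOn_const))).mul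
          (hgcont _ (fun x hx => ne_of_gt (lt_of_le_of_lt hρ0 hx.1)))).aestronglyMeasurable
          measurableSet_Ioc
      · filter_upwards [ae_restrict_mem measurableSet_Ioc] with z hz
        obtain ⟨h0, h1⟩ := hlin01 z hz
        rw [Real.norm_eq_abs, Real.norm_eq_abs, abs_mul]
        calc |1/2 - c * (z - θ)| * |g z| ≤ 1 * |g z| :=
              mul_le_mul_of_nonneg_right (by rw [abs_of_nonneg h0]; exact h1) (abs_nonneg _)
          _ = |g z| := one_mul _
    have hI2 : ∫ z in Ioc ρ ϑ, (1/2 - c * (z - θ)) * g z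
        = G ρ - c * ∫ z in ρ..ϑ, G z := by
      set H : ℝ → ℝ := fun z => (1/2 - c * (z - θ)) * G z with hH_def
      set H' : ℝ → ℝ := fun z => -c * G z + (1/2 - c * (z - θ)) * (-(g z)) with hH'_def
      have hd : ∀ x ∈ Ioo ρ ϑ, HasDerivWithinAt H (H' x) (Ioi x) x := by
        intro x hx
        have hx0 : 0 < x := lt_of_le_of_lt hρ0 hx.1
        have hl : HasDerivAt (fun z : ℝ => 1/2 - c * (z - θ)) (-c) x := by
          have h1 : HasDerivAt (fun z : ℝ => c * (z - θ)) c x := by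
            simpa using HasDerivAt.const_mul c ((hasDerivAt_id x).sub_const θ)
          exact h1.const_sub (1/2)
        exact (hl.mul (hGderiv x hx0)).hasDerivWithinAt
      have hcontH : ContinuousOn H (Icc ρ ϑ) :=
        ((continuous_const.sub (continuous_const.mul (continuous_id.sub continuous_const))).mul
          hGc).continuousOn
      have hint1 : IntervalIntegrable (fun z : ℝ => -c * G z) volume ρ ϑ :=
        (continuous_const.mul hGc).intervalIntegrable ρ ϑ
      have hint2 : IntervalIntegrable (fun z : ℝ => (1/2 - c * (z - θ)) * (-(g z)))
          volume ρ ϑ := by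
        rw [intervalIntegrable_iff_integrableOn_Ioc_of_le hρϑ.le]
        have h2 : IntegrableOn (fun z : ℝ => -((1/2 - c * (z - θ)) * g z)) (Ioc ρ ϑ) :=
          hlin_int.neg
        refine h2.congr_fun (fun x _ => by ring) measurableSet_Ioc
      have hintH' : IntervalIntegrable H' volume ρ ϑ := hint1.add hint2
      have hftc := intervalIntegral.integral_eq_sub_of_hasDeriv_right_of_le hρϑ.le
        hcontH hd hintH'
      have hHϑ : H ϑ = 0 := by
        simp only [hH_def]
        have : (1:ℝ)/2 - c * (ϑ - θ) = 0 := by linarith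
        rw [this, zero_mul]
      have hHρ : H ρ = G ρ := by
        simp only [hH_def]
        have : (1:ℝ)/2 - c * (ρ - θ) = 1 := by linarith
        rw [this, one_mul]
      have hsplit : ∫ z in ρ..ϑ, H' z
          = (∫ z in ρ..ϑ, -c * G z) + ∫ z in ρ..ϑ, (1/2 - c * (z - θ)) * (-(g z)) :=
        intervalIntegral.integral_add hint1 hint2
      have hneg : ∫ z in ρ..ϑ, (1/2 - c * (z - θ)) * (-(g z))
          = -∫ z in ρ..ϑ, (1/2 - c * (z - θ)) * g z := by
        rw [← intervalIntegral.integral_neg]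
        congr 1
        ext z
        ring
      have hcmul : ∫ z in ρ..ϑ, -c * G z = -c * ∫ z in ρ..ϑ, G z :=
        intervalIntegral.integral_const_mul _ _
      rw [hftc, hHϑ, hHρ, hcmul, hneg] at hsplit
      have : ∫ z in ρ..ϑ, (1/2 - c * (z - θ)) * g z = G ρ - c * ∫ z in ρ..ϑ, G z := by
        linarith
      rw [← this, intervalIntegral.integral_of_le hρϑ.le]
    -- eq of integrands
    have heq1 : EqOn (fun z : ℝ => W z * g z) g (Ioc 0 ρ) := by
      intro z hz
      simp only
      rw [hW z, if_pos hz.2, one_mul]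
    have heq2 : EqOn (fun z : ℝ => W z * g z)
        (fun z : ℝ => (1/2 - c * (z - θ)) * g z) (Ioc ρ ϑ) := by
      intro z hz
      simp only
      by_cases h : z < ϑ
      · rw [hW z, if_neg (not_le.2 hz.1), if_pos h]
      · have hzϑ : z = ϑ := le_antisymm hz.2 (not_lt.1 h)
        have h0 : (1:ℝ)/2 - c * (ϑ - θ) = 0 := by linarith
        rw [hW z, if_neg (not_le.2 hz.1), if_neg h, hzϑ, h0]
    have heq3 : EqOn (fun z : ℝ => W z * g z) (fun _ => (0:ℝ)) (Ioi ϑ) := by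
      intro z hz
      simp only
      rw [hW z, if_neg (not_le.2 (lt_of_lt_of_le hρϑ (le_of_lt hz))),
        if_neg (not_lt.2 (le_of_lt hz)), zero_mul]
    -- integrabilities
    have hint1 : IntegrableOn (fun z : ℝ => W z * g z) (Ioc 0 ρ) :=
      (hgint ρ).congr_fun (fun x hx => (heq1 hx).symm) measurableSet_Ioc
    have hint2 : IntegrableOn (fun z : ℝ => W z * g z) (Ioc ρ ϑ) :=
      hlin_int.congr_fun (fun x hx => (heq2 hx).symm) measurableSet_Ioc
    have hint3 : IntegrableOn (fun z : ℝ => W z * g z) (Ioi ϑ) :=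
      (integrableOn_zero : IntegrableOn (fun _ : ℝ => (0:ℝ)) (Ioi ϑ) volume).congr_fun
        (fun x hx => (heq3 hx).symm) measurableSet_Ioi
    -- splitting
    have hdisj1 : Disjoint (Ioc (0:ℝ) ϑ) (Ioi ϑ) := by
      rw [Set.disjoint_left]
      rintro x hx hx2
      exact absurd hx.2 (not_le.2 hx2)
    have hdisj2 : Disjoint (Ioc (0:ℝ) ρ) (Ioc ρ ϑ) := by
      rw [Set.disjoint_left]
      rintro x hx hx2
      exact absurd hx.2 (not_le.2 hx2.1)
    have hWg : ∫ z in Set.Ioi (0:ℝ), W z * f lam z = ∫ z in Set.Ioi (0:ℝ), W z * g z := by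
      refine setIntegral_congr_fun measurableSet_Ioi (fun z hz => ?_)
      rw [hf lam z hz]
    rw [hWg, show Ioi (0:ℝ) = Ioc 0 ϑ ∪ Ioi ϑ from (Ioc_union_Ioi_eq_Ioi hϑ0.le).symm,
      setIntegral_union hdisj1 measurableSet_Ioi (hint1.union hint2 |>.congr_set_ae
        (by rw [Ioc_union_Ioc_eq_Ioc hρ0 hρϑ.le]; exact Filter.EventuallyEq.rfl)) hint3,
      show Ioc (0:ℝ) ϑ = Ioc 0 ρ ∪ Ioc ρ ϑ from (Ioc_union_Ioc_eq_Ioc hρ0 hρϑ.le).symm,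
      setIntegral_union hdisj2 measurableSet_Ioc hint1 hint2,
      setIntegral_congr_fun measurableSet_Ioc heq1,
      setIntegral_congr_fun measurableSet_Ioc heq2,
      setIntegral_congr_fun measurableSet_Ioi heq3, hI1, hI2]
    simp only [integral_zero]
    ring
  -- conclusion
  intro lam₁ lam₂ h1 h12
  rw [key lam₁ h1, key lam₂ (lt_of_lt_of_le h1 h12)]
  have hmono : ∫ z in ρ..ϑ, Real.exp (-(ζ * lam₂ * z ^ (2/α)) - ξ * z)
      ≤ ∫ z in ρ..ϑ, Real.exp (-(ζ * lam₁ * z ^ (2/α)) - ξ * z) := by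
    refine intervalIntegral.integral_mono_on hρϑ.le
      ((hGcont lam₂).intervalIntegrable ρ ϑ) ((hGcont lam₁).intervalIntegrable ρ ϑ) ?_
    intro x hx
    apply Real.exp_le_exp.2
    have hxp : 0 ≤ x ^ (2/α) := Real.rpow_nonneg (le_trans hρ0 hx.1) _
    have : ζ * lam₁ * x ^ (2/α) ≤ ζ * lam₂ * x ^ (2/α) :=
      mul_le_mul_of_nonneg_right (mul_le_mul_of_nonneg_left h12 hζ.le) hxp
    linarith
  have := mul_le_mul_of_nonneg_left hmono hc.le
  linarith
end

section
/- Fix α > 2, ζ λ > 0, n > 0 and R > 0, and assume ρ ≥ 0. Write f(z | ξ) for the SINR PDF with noise parameter ξ. Then the approximated outage probability is nondecreasing in the noise level: for all 0 ≤ ξ₁ ≤ ξ₂, ∫_0^∞ W(z) f(z | ξ₁) dz ≤ ∫_0^∞ W(z) f(z | ξ₂) dz. (As the noise level increases, the outage probability increases.) -/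
open MeasureTheory Set Real

lemma aux_int (C q ξ a b M : ℝ) (hq0 : 0 < q) (hC : 0 ≤ C) (hξ : 0 ≤ ξ) (ha : 0 ≤ a)
    (w : ℝ → ℝ) (hw : Measurable w) (hwb : ∀ z ∈ Set.Ioc a b, |w z| ≤ M) :
    IntegrableOn (fun z => w z * ((C*q*z^(q-1) + ξ) * Real.exp (-(C*z^q) - ξ*z)))
      (Set.Ioc a b) := by
  rcases le_or_gt b a with hab | hab
  · rw [Set.Ioc_eq_empty (not_lt.mpr hab)]; exact integrableOn_empty
  have hbound : IntegrableOn (fun z => M * (C*q*z^(q-1) + ξ)) (Set.Ioc a b) := by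
    exact (((intervalIntegral.intervalIntegrable_rpow' (by linarith) (a := a) (b := b)).1.const_mul
      (C*q)).add (integrableOn_const measure_Ioc_lt_top.ne)).const_mul M
  have hmeas : AEStronglyMeasurable
      (fun z => w z * ((C*q*z^(q-1) + ξ) * Real.exp (-(C*z^q) - ξ*z)))
      (volume.restrict (Set.Ioc a b)) := by
    apply Measurable.aestronglyMeasurable
    fun_prop
  refine Integrable.mono hbound hmeas ?_
  rw [MeasureTheory.ae_restrict_iff' measurableSet_Ioc]
  apply Filter.Eventually.of_forall
  intro z hz
  have hz0 : 0 < z := lt_of_le_of_lt ha hz.1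
  have hrp : (0:ℝ) ≤ z ^ (q-1) := Real.rpow_nonneg hz0.le _
  have hP : 0 ≤ C*q*z^(q-1) + ξ :=
    add_nonneg (mul_nonneg (mul_nonneg hC hq0.le) hrp) hξ
  have hE1 : Real.exp (-(C*z^q) - ξ*z) ≤ 1 := by
    rw [Real.exp_le_one_iff]
    have h1 : 0 ≤ C * z ^ q := mul_nonneg hC (Real.rpow_nonneg hz0.le _)
    have h2 : 0 ≤ ξ * z := mul_nonneg hξ hz0.le
    linarith
  have hM : 0 ≤ M := le_trans (abs_nonneg _) (hwb z hz)
  have hPE : 0 ≤ (C*q*z^(q-1) + ξ) * Real.exp (-(C*z^q) - ξ*z) :=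
    mul_nonneg hP (Real.exp_pos _).le
  rw [Real.norm_eq_abs, Real.norm_eq_abs, abs_mul, abs_of_nonneg hPE,
    abs_of_nonneg (mul_nonneg hM hP)]
  calc |w z| * ((C*q*z^(q-1) + ξ) * Real.exp (-(C*z^q) - ξ*z))
      ≤ M * ((C*q*z^(q-1) + ξ) * Real.exp (-(C*z^q) - ξ*z)) :=
        mul_le_mul_of_nonneg_right (hwb z hz) hPE
    _ ≤ M * ((C*q*z^(q-1) + ξ) * 1) := by
        apply mul_le_mul_of_nonneg_left _ hM
        exact mul_le_mul_of_nonneg_left hE1 hP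
    _ = M * (C*q*z^(q-1) + ξ) := by ring

lemma aux_deriv (C q ξ : ℝ) {z : ℝ} (hz : 0 < z) :
    HasDerivAt (fun z => Real.exp (-(C*z^q) - ξ*z))
      (-((C*q*z^(q-1) + ξ) * Real.exp (-(C*z^q) - ξ*z))) z := by
  have hr := Real.hasDerivAt_rpow_const (x := z) (p := q) (Or.inl hz.ne')
  have h1 : HasDerivAt (fun z : ℝ => -(C*z^q) - ξ*z) (-(C*(q*z^(q-1))) - ξ) z := by
    have h := (hr.const_mul C).neg.sub ((hasDerivAt_id z).const_mul ξ)
    rw [mul_one] at h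
    exact h
  have h2 := h1.exp
  convert h2 using 1
  ring

lemma aux_cont (C q ξ : ℝ) (hq0 : 0 < q) :
    Continuous fun z : ℝ => Real.exp (-(C*z^q) - ξ*z) := by
  have h1 : Continuous fun z : ℝ => z ^ q := by
    rw [continuous_iff_continuousAt]
    intro x
    exact Real.continuousAt_rpow_const x q (Or.inr hq0.le)
  exact Real.continuous_exp.comp (((continuous_const.mul h1 : Continuous fun z:ℝ => C * z ^ q).neg).sub (continuous_const.mul continuous_id))

lemma aux_ftc (C q ξ a b : ℝ) (hq0 : 0 < q) (hC : 0 ≤ C) (hξ : 0 ≤ ξ)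
    (ha : 0 ≤ a) (hab : a ≤ b) :
    ∫ z in a..b, (C*q*z^(q-1) + ξ) * Real.exp (-(C*z^q) - ξ*z)
      = Real.exp (-(C*a^q) - ξ*a) - Real.exp (-(C*b^q) - ξ*b) := by
  have key := intervalIntegral.integral_eq_sub_of_hasDeriv_right_of_le hab
    (f := fun z => -Real.exp (-(C*z^q) - ξ*z))
    (f' := fun z => (C*q*z^(q-1) + ξ) * Real.exp (-(C*z^q) - ξ*z))
    ((aux_cont C q ξ hq0).neg.continuousOn)
    (fun x hx => by
      have hx0 : 0 < x := lt_of_le_of_lt ha hx.1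
      have h := ((aux_deriv C q ξ hx0).neg).hasDerivWithinAt (s := Set.Ioi x)
      rw [neg_neg] at h
      exact h)
    (by
      rw [intervalIntegrable_iff_integrableOn_Ioc_of_le hab]
      simpa using aux_int C q ξ a b 1 hq0 hC hξ ha (fun _ => 1) measurable_const
        (by intro z hz; simp))
  rw [key]; ring

lemma aux_ftcw (C q ξ a b c : ℝ) (hq0 : 0 < q) (hC : 0 ≤ C) (hξ : 0 ≤ ξ)
    (ha : 0 ≤ a) (hab : a ≤ b) (hc : 0 ≤ c) :
    ∫ z in a..b, (c * Real.exp (-(C*z^q) - ξ*z)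
        + c*(b - z) * ((C*q*z^(q-1) + ξ) * Real.exp (-(C*z^q) - ξ*z)))
      = c*(b-a) * Real.exp (-(C*a^q) - ξ*a) := by
  have key := intervalIntegral.integral_eq_sub_of_hasDeriv_right_of_le hab
    (f := fun z => -(c*(b - z) * Real.exp (-(C*z^q) - ξ*z)))
    (f' := fun z => c * Real.exp (-(C*z^q) - ξ*z)
        + c*(b - z) * ((C*q*z^(q-1) + ξ) * Real.exp (-(C*z^q) - ξ*z)))
    (by
      apply Continuous.continuousOn
      exact ((continuous_const.mul (continuous_const.sub continuous_id)).mul (aux_cont C q ξ hq0)).neg)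
    (fun x hx => by
      have hx0 : 0 < x := lt_of_le_of_lt ha hx.1
      have hwd : HasDerivAt (fun z : ℝ => c*(b - z)) (-c) x := by
        simpa using ((hasDerivAt_id x).const_sub b).const_mul c
      have h3 := (hwd.mul (aux_deriv C q ξ hx0)).neg
      have h4 : -(-c * Real.exp (-(C*x^q) - ξ*x)
          + c*(b - x) * -((C*q*x^(q-1) + ξ) * Real.exp (-(C*x^q) - ξ*x)))
          = c * Real.exp (-(C*x^q) - ξ*x)
            + c*(b - x) * ((C*q*x^(q-1) + ξ) * Real.exp (-(C*x^q) - ξ*x)) := by ring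
      rw [h4] at h3
      exact h3.hasDerivWithinAt)
    (by
      rw [intervalIntegrable_iff_integrableOn_Ioc_of_le hab]
      apply Integrable.add
      · exact (continuous_const.mul (aux_cont C q ξ hq0)).integrableOn_Ioc
      · exact aux_int C q ξ a b (c*(b-a)) hq0 hC hξ ha (fun z => c*(b - z))
          (by fun_prop)
          (by
            intro z hz
            rw [abs_of_nonneg (mul_nonneg hc (by linarith [hz.2]))]
            exact mul_le_mul_of_nonneg_left (by linarith [hz.1, ha]) hc))
  rw [key]; ring

/-- The approximated outage probability is nondecreasing in the noise level:
for `0 ≤ ξ₁ ≤ ξ₂`, `∫_0^∞ W(z) f(z|ξ₁) dz ≤ ∫_0^∞ W(z) f(z|ξ₂) dz`. -/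
theorem stmt_14
    (α ζ lam : ℝ) (hα : 2 < α) (hζlam : 0 < ζ * lam)
    (f : ℝ → ℝ → ℝ)
    (hf : ∀ ξ : ℝ, ∀ z > (0:ℝ), f ξ z = (2 * ζ * lam / α * z ^ (2/α - 1) + ξ) *
      Real.exp (-(ζ * lam * z ^ (2/α)) - ξ * z))
    (n R θ β ϑ ρ : ℝ) (hn : 0 < n) (hR : 0 < R)
    (hθ : θ = 2 ^ R - 1)
    (hβ : β = Real.sqrt (n / (2 * Real.pi)) * (2 ^ (2 * R) - 1) ^ (-(1:ℝ)/2))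
    (hϑ : ϑ = θ + Real.sqrt (Real.pi / 2) / β)
    (hρ : ρ = θ - Real.sqrt (Real.pi / 2) / β)
    (hρ0 : 0 ≤ ρ)
    (W : ℝ → ℝ)
    (hW : ∀ t, W t = if t ≤ ρ then 1
      else if t < ϑ then 1/2 - β / Real.sqrt (2 * Real.pi) * (t - θ) else 0) :
    ∀ ξ₁ ξ₂ : ℝ, 0 ≤ ξ₁ → ξ₁ ≤ ξ₂ →
      ∫ z in Set.Ioi (0:ℝ), W z * f ξ₁ z ≤ ∫ z in Set.Ioi (0:ℝ), W z * f ξ₂ z := by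
  intro ξ₁ ξ₂ hξ₁ h12
  have hξ₂ : 0 ≤ ξ₂ := le_trans hξ₁ h12
  have hα0 : 0 < α := by linarith
  have hq0 : 0 < 2/α := by positivity
  have hq1 : 2/α < 1 := by rw [div_lt_one hα0]; linarith
  have hπ := Real.pi_pos
  have hβ0 : 0 < β := by
    rw [hβ]
    apply mul_pos
    · exact Real.sqrt_pos.2 (div_pos hn (by positivity))
    · apply Real.rpow_pos_of_pos
      have h1 : (1:ℝ) < 2 ^ (2*R) := by
        rw [Real.one_lt_rpow_iff_of_pos (by norm_num)]
        left; exact ⟨one_lt_two, by linarith⟩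
      linarith
  set c : ℝ := β / Real.sqrt (2 * Real.pi) with hcdef
  have hsq2π : 0 < Real.sqrt (2 * Real.pi) := Real.sqrt_pos.2 (by positivity)
  have hc : 0 < c := div_pos hβ0 hsq2π
  have hs : 0 < Real.sqrt (Real.pi/2) := Real.sqrt_pos.2 (by positivity)
  have hhalf : c * (Real.sqrt (Real.pi/2) / β) = 1/2 := by
    have h1 : Real.sqrt (Real.pi/2) / Real.sqrt (2*Real.pi) = 1/2 := by
      rw [← Real.sqrt_div (by positivity)]
      rw [show Real.pi/2/(2*Real.pi) = 1/4 from by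
        field_simp
        ring]
      rw [show (1:ℝ)/4 = (1/2)^2 by norm_num, Real.sqrt_sq (by norm_num)]
    calc c * (Real.sqrt (Real.pi/2) / β)
        = (β * Real.sqrt (Real.pi/2)) / (Real.sqrt (2*Real.pi) * β) := by
          rw [hcdef, div_mul_div_comm]
      _ = (β * Real.sqrt (Real.pi/2)) / (β * Real.sqrt (2*Real.pi)) := by rw [mul_comm (Real.sqrt (2*Real.pi)) β]
      _ = Real.sqrt (Real.pi/2) / Real.sqrt (2*Real.pi) := mul_div_mul_left _ _ hβ0.ne'
      _ = 1/2 := h1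
  have hρϑ : ρ < ϑ := by
    have := div_pos hs hβ0
    rw [hρ, hϑ]; linarith
  have hϑ0 : 0 < ϑ := lt_of_le_of_lt hρ0 hρϑ
  have hcϑρ : c * (ϑ - ρ) = 1 := by
    calc c * (ϑ - ρ) = 2 * (c * (Real.sqrt (Real.pi/2) / β)) := by rw [hϑ, hρ]; ring
      _ = 1 := by rw [hhalf]; norm_num
  -- W values
  have hW1 : ∀ t ∈ Set.Ioc (0:ℝ) ρ, W t = 1 := by
    intro t ht; rw [hW, if_pos ht.2]
  have hW2 : ∀ t ∈ Set.Ioc ρ ϑ, W t = c * (ϑ - t) := by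
    intro t ht
    rw [hW, if_neg (not_le.mpr ht.1)]
    rcases eq_or_lt_of_le ht.2 with h | h
    · rw [if_neg (by rw [h]; exact lt_irrefl _), h]; ring
    · rw [if_pos h, hϑ]
      have h5 : c * (θ + Real.sqrt (Real.pi/2)/β - t)
          = c * (Real.sqrt (Real.pi/2)/β) - c * (t - θ) := by ring
      rw [h5, hhalf]
  have hW3 : ∀ t, ϑ < t → W t = 0 := by
    intro t ht
    rw [hW, if_neg (by push_neg; linarith), if_neg (not_lt.mpr ht.le)]
  have hWmeas : Measurable W := by
    have hWfun : W = fun t => if t ≤ ρ then (1:ℝ)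
        else if t < ϑ then 1/2 - c * (t - θ) else 0 := funext hW
    rw [hWfun]
    apply Measurable.ite (measurableSet_le measurable_id measurable_const) measurable_const
    exact Measurable.ite (measurableSet_lt measurable_id measurable_const)
      (by fun_prop) measurable_const
  have hWbd1 : ∀ t ∈ Set.Ioc (0:ℝ) ρ, |W t| ≤ 1 := by
    intro t ht; rw [hW1 t ht]; norm_num
  have hWbd2 : ∀ t ∈ Set.Ioc ρ ϑ, |W t| ≤ 1 := by
    intro t ht
    rw [hW2 t ht, abs_of_nonneg (mul_nonneg hc.le (by linarith [ht.2]))]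
    nlinarith [ht.1, hcϑρ]
  -- the key formula
  have key : ∀ ξ : ℝ, 0 ≤ ξ →
      ∫ z in Set.Ioi (0:ℝ), W z * f ξ z
        = 1 - c * ∫ z in ρ..ϑ, Real.exp (-(ζ*lam*z^(2/α)) - ξ*z) := by
    intro ξ hξ
    have hCq : 2*ζ*lam/α = ζ*lam*(2/α) := by ring
    have hfg : ∀ z : ℝ, 0 < z → f ξ z = (ζ*lam*(2/α)*z^(2/α-1) + ξ) *
        Real.exp (-(ζ*lam*z^(2/α)) - ξ*z) := by
      intro z hz
      rw [hf ξ z hz]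
      ring_nf
    -- integrability
    have intA : IntegrableOn (fun z => W z * f ξ z) (Set.Ioc (0:ℝ) ρ) := by
      apply IntegrableOn.congr_fun
        (aux_int (ζ*lam) (2/α) ξ 0 ρ 1 hq0 hζlam.le hξ le_rfl W hWmeas hWbd1)
        _ measurableSet_Ioc
      intro z hz
      show W z * _ = W z * f ξ z
      rw [hfg z hz.1]
    have intB : IntegrableOn (fun z => W z * f ξ z) (Set.Ioc ρ ϑ) := by
      apply IntegrableOn.congr_fun
        (aux_int (ζ*lam) (2/α) ξ ρ ϑ 1 hq0 hζlam.le hξ hρ0 W hWmeas hWbd2)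
        _ measurableSet_Ioc
      intro z hz
      show W z * _ = W z * f ξ z
      rw [hfg z (lt_of_le_of_lt hρ0 hz.1)]
    have intC : IntegrableOn (fun z => W z * f ξ z) (Set.Ioi ϑ) := by
      apply IntegrableOn.congr_fun (integrableOn_zero (ε' := ℝ)) _ measurableSet_Ioi
      intro z hz
      simp [hW3 z hz]
    have hsplit1 : Set.Ioi (0:ℝ) = Set.Ioc 0 ϑ ∪ Set.Ioi ϑ :=
      (Set.Ioc_union_Ioi_eq_Ioi hϑ0.le).symm
    have hsplit2 : Set.Ioc (0:ℝ) ϑ = Set.Ioc 0 ρ ∪ Set.Ioc ρ ϑ :=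
      (Set.Ioc_union_Ioc_eq_Ioc hρ0 hρϑ.le).symm
    have e1 : ∫ z in Set.Ioi (0:ℝ), W z * f ξ z
        = (∫ z in Set.Ioc (0:ℝ) ρ, W z * f ξ z) + (∫ z in Set.Ioc ρ ϑ, W z * f ξ z)
          + ∫ z in Set.Ioi ϑ, W z * f ξ z := by
      rw [hsplit1, setIntegral_union (Set.Ioc_disjoint_Ioi_same) measurableSet_Ioi
        (by rw [hsplit2]; exact intA.union intB) intC, hsplit2,
        setIntegral_union (Set.Ioc_disjoint_Ioc_of_le le_rfl) measurableSet_Ioc intA intB]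
    have e2 : ∫ z in Set.Ioi ϑ, W z * f ξ z = 0 := by
      rw [setIntegral_congr_fun measurableSet_Ioi
        (fun z hz => by simp [hW3 z hz] : Set.EqOn (fun z => W z * f ξ z) (fun _ => (0:ℝ)) _)]
      simp
    have e3 : ∫ z in Set.Ioc (0:ℝ) ρ, W z * f ξ z
        = 1 - Real.exp (-(ζ*lam*ρ^(2/α)) - ξ*ρ) := by
      rw [setIntegral_congr_fun measurableSet_Ioc
        (fun z hz => by
          show W z * f ξ z = _
          rw [hW1 z hz, hfg z hz.1, one_mul] :
          Set.EqOn (fun z => W z * f ξ z)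
            (fun z => (ζ*lam*(2/α)*z^(2/α-1) + ξ) *
              Real.exp (-(ζ*lam*z^(2/α)) - ξ*z)) _)]
      rw [← intervalIntegral.integral_of_le hρ0]
      rw [aux_ftc (ζ*lam) (2/α) ξ 0 ρ hq0 hζlam.le hξ le_rfl hρ0]
      rw [Real.zero_rpow hq0.ne']
      norm_num
    have Fcont := aux_cont (ζ*lam) (2/α) ξ hq0
    have intW : IntervalIntegrable
        (fun z => c*(ϑ - z) * ((ζ*lam*(2/α)*z^(2/α-1) + ξ) *
          Real.exp (-(ζ*lam*z^(2/α)) - ξ*z))) volume ρ ϑ := by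
      rw [intervalIntegrable_iff_integrableOn_Ioc_of_le hρϑ.le]
      apply aux_int (ζ*lam) (2/α) ξ ρ ϑ (c*(ϑ-ρ)) hq0 hζlam.le hξ hρ0
        (fun z => c*(ϑ - z)) (by fun_prop)
      intro z hz
      rw [abs_of_nonneg (mul_nonneg hc.le (by linarith [hz.2]))]
      exact mul_le_mul_of_nonneg_left (by linarith [hz.1]) hc.le
    have e4 : ∫ z in Set.Ioc ρ ϑ, W z * f ξ z
        = Real.exp (-(ζ*lam*ρ^(2/α)) - ξ*ρ)
          - c * ∫ z in ρ..ϑ, Real.exp (-(ζ*lam*z^(2/α)) - ξ*z) := by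
      rw [setIntegral_congr_fun measurableSet_Ioc
        (fun z hz => by
          show W z * f ξ z = _
          rw [hW2 z hz, hfg z (lt_of_le_of_lt hρ0 hz.1)] :
          Set.EqOn (fun z => W z * f ξ z) (fun z => c*(ϑ - z) * ((ζ*lam*(2/α)*z^(2/α-1) + ξ) *
            Real.exp (-(ζ*lam*z^(2/α)) - ξ*z))) _)]
      rw [← intervalIntegral.integral_of_le hρϑ.le]
      have hadd := intervalIntegral.integral_add
        (((show Continuous fun z => c * Real.exp (-(ζ*lam*z^(2/α)) - ξ*z) from continuous_const.mul Fcont)).intervalIntegrable ρ ϑ) intW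
      have hftcw := aux_ftcw (ζ*lam) (2/α) ξ ρ ϑ c hq0 hζlam.le hξ hρ0 hρϑ.le hc.le
      rw [hftcw] at hadd
      have hconst : ∫ z in ρ..ϑ, c * Real.exp (-(ζ*lam*z^(2/α)) - ξ*z)
          = c * ∫ z in ρ..ϑ, Real.exp (-(ζ*lam*z^(2/α)) - ξ*z) :=
        intervalIntegral.integral_const_mul c _
      rw [hconst] at hadd
      have : c*(ϑ-ρ) * Real.exp (-(ζ*lam*ρ^(2/α)) - ξ*ρ)
          = Real.exp (-(ζ*lam*ρ^(2/α)) - ξ*ρ) := by rw [hcϑρ]; ring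
      rw [this] at hadd
      linarith
    rw [e1, e2, e3, e4]
    ring
  rw [key ξ₁ hξ₁, key ξ₂ hξ₂]
  have hmono : ∫ z in ρ..ϑ, Real.exp (-(ζ*lam*z^(2/α)) - ξ₂*z)
      ≤ ∫ z in ρ..ϑ, Real.exp (-(ζ*lam*z^(2/α)) - ξ₁*z) := by
    apply intervalIntegral.integral_mono_on hρϑ.le
      ((aux_cont (ζ*lam) (2/α) ξ₂ hq0).intervalIntegrable ρ ϑ)
      ((aux_cont (ζ*lam) (2/α) ξ₁ hq0).intervalIntegrable ρ ϑ)
    intro x hx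
    apply Real.exp_le_exp.2
    have hx0 : 0 ≤ x := le_trans hρ0 hx.1
    nlinarith [mul_le_mul_of_nonneg_right h12 hx0]
  nlinarith [hc]
end

section
/- Fix α > 2, λ > 0, d > 0, W_p > 0, η ≥ 0, κ > 0, n > 0 and R > 0, and assume ρ ≥ 0. For a transmit power W_s > 0, set ζ(W_s) = κ π d² (W_p/W_s)^{2/α} and ξ(W_s) = η d^α / W_s, and write f(z | W_s) for the SINR PDF with these parameters. Then the approximated outage probability is nonincreasing in the transmit power: for all 0 < W_s^{(1)} ≤ W_s^{(2)}, ∫_0^∞ W(z) f(z | W_s^{(2)}) dz ≤ ∫_0^∞ W(z) f(z | W_s^{(1)}) dz. (As the reference-link transmit power increases, the link reaches a higher reliability level.) -/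
open MeasureTheory Set Real

set_option maxHeartbeats 1600000

/-- Derivative of the complementary CDF. -/
lemma aux_ccdf_deriv (a b p : ℝ) (hp0 : 0 < p) {z : ℝ} (hz : 0 < z) :
    HasDerivAt (fun z : ℝ => Real.exp (-(a * z ^ p) - b * z))
      (-((a * p * z ^ (p - 1) + b) * Real.exp (-(a * z ^ p) - b * z))) z := by
  have h1 : HasDerivAt (fun z : ℝ => z ^ p) (p * z ^ (p - 1)) z :=
    Real.hasDerivAt_rpow_const (Or.inl (ne_of_gt hz))
  have h2 : HasDerivAt (fun z : ℝ => -(a * z ^ p) - b * z)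
      (-(a * (p * z ^ (p - 1))) - b * 1) z :=
    ((h1.const_mul a).neg).sub ((hasDerivAt_id z).const_mul b)
  have h3 := h2.exp
  convert h3 using 1
  ring

/-- Evaluation of the approximated outage probability. -/
lemma aux_outage_eval (p a b θ c ρ ϑ : ℝ) (hp0 : 0 < p) (ha : 0 ≤ a) (hb : 0 ≤ b)
    (h0ρ : 0 ≤ ρ) (hc : 0 < c)
    (hρval : c * (ρ - θ) = -(1/2)) (hϑval : c * (ϑ - θ) = 1/2)
    (Wfn : ℝ → ℝ)
    (hW : ∀ t, Wfn t = if t ≤ ρ then 1 else if t < ϑ then 1/2 - c * (t - θ) else 0) :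
    ∫ z in Set.Ioi (0:ℝ),
        Wfn z * ((a * p * z ^ (p - 1) + b) * Real.exp (-(a * z ^ p) - b * z))
      = 1 - c * ∫ z in ρ..ϑ, Real.exp (-(a * z ^ p) - b * z) := by
  set G : ℝ → ℝ := fun z => Real.exp (-(a * z ^ p) - b * z) with hGdef
  set F : ℝ → ℝ := fun z => (a * p * z ^ (p - 1) + b) * G z with hFdef
  set L : ℝ → ℝ := fun z => 1/2 - c * (z - θ) with hLdef
  have hρϑ : ρ < ϑ := by nlinarith
  have h0ϑ : (0:ℝ) < ϑ := lt_of_le_of_lt h0ρ hρϑ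
  have hcontp : Continuous fun z : ℝ => z ^ p :=
    Real.continuous_rpow_const hp0.le
  have hGc : Continuous G := by
    apply Real.continuous_exp.comp
    exact ((continuous_const.mul hcontp).neg).sub (continuous_const.mul continuous_id)
  have hLc : Continuous L := by
    have : Continuous fun z : ℝ => 1/2 - c * (z - θ) := by continuity
    exact this
  have hG0 : G 0 = 1 := by
    simp [hGdef, Real.zero_rpow (ne_of_gt hp0)]
  -- interval integrability of F
  have hr : (-1:ℝ) < p - 1 := by linarith
  have hFint : ∀ u v : ℝ, IntervalIntegrable F volume u v := by
    intro u v
    have h1 : IntervalIntegrable (fun z : ℝ => z ^ (p - 1)) volume u v :=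
      intervalIntegral.intervalIntegrable_rpow' hr
    have h2 : F = fun z => z ^ (p - 1) * (a * p * G z) + b * G z := by
      funext z; simp only [hFdef]; ring
    rw [h2]
    exact (h1.mul_continuousOn (((continuous_const.mul hGc)).continuousOn)).add
      ((continuous_const.mul hGc).intervalIntegrable u v)
  have hLFint : ∀ u v : ℝ, IntervalIntegrable (fun z => L z * F z) volume u v := by
    intro u v
    have h1 : IntervalIntegrable (fun z : ℝ => z ^ (p - 1)) volume u v :=
      intervalIntegral.intervalIntegrable_rpow' hr
    have h2 : (fun z => L z * F z)
        = fun z => z ^ (p - 1) * (a * p * (L z * G z)) + b * (L z * G z) := by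
      funext z; simp only [hFdef]; ring
    rw [h2]
    exact (h1.mul_continuousOn (((continuous_const.mul (hLc.mul hGc))).continuousOn)).add
      ((continuous_const.mul (hLc.mul hGc)).intervalIntegrable u v)
  -- values of Wfn on the pieces
  have hW1 : ∀ z ∈ Ioc (0:ℝ) ρ, Wfn z * F z = F z := by
    intro z hz; rw [hW z, if_pos hz.2, one_mul]
  have hW2 : ∀ z ∈ Ioc ρ ϑ, Wfn z * F z = L z * F z := by
    intro z hz
    rw [hW z, if_neg (not_le.mpr hz.1)]
    rcases lt_or_eq_of_le hz.2 with h | h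
    · rw [if_pos h]
    · rw [if_neg (by rw [h]; exact lt_irrefl _)]
      have : L z = 0 := by simp only [hLdef]; rw [h]; linarith
      rw [this]
  have hW3 : ∀ z ∈ Ioi ϑ, Wfn z * F z = 0 := by
    intro z hz
    rw [hW z, if_neg (not_le.mpr (lt_trans hρϑ hz)), if_neg (not_lt.mpr (le_of_lt hz)),
      zero_mul]
  -- integrable on pieces
  have hI1 : IntegrableOn (fun z => Wfn z * F z) (Ioc 0 ρ) := by
    exact ((hFint 0 ρ).1).congr_fun (fun z hz => (hW1 z hz).symm) measurableSet_Ioc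
  have hI2 : IntegrableOn (fun z => Wfn z * F z) (Ioc ρ ϑ) := by
    exact ((hLFint ρ ϑ).1).congr_fun (fun z hz => (hW2 z hz).symm) measurableSet_Ioc
  have hI3 : IntegrableOn (fun z => Wfn z * F z) (Ioi ϑ) := by
    apply IntegrableOn.congr_fun (integrableOn_zero) (fun z hz => (hW3 z hz).symm)
      measurableSet_Ioi
  -- split
  have hsplit : ∫ z in Set.Ioi (0:ℝ), Wfn z * F z
      = (∫ z in Ioc 0 ρ, Wfn z * F z) + (∫ z in Ioc ρ ϑ, Wfn z * F z)
        + ∫ z in Ioi ϑ, Wfn z * F z := by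
    rw [← Ioc_union_Ioi_eq_Ioi h0ρ, ← Ioc_union_Ioi_eq_Ioi hρϑ.le]
    rw [setIntegral_union (Set.disjoint_union_right.mpr
        ⟨Ioc_disjoint_Ioc_of_le le_rfl, Ioc_disjoint_Ioi hρϑ.le⟩)
        (measurableSet_Ioc.union measurableSet_Ioi) hI1 (hI2.union hI3),
      setIntegral_union (Ioc_disjoint_Ioi le_rfl) measurableSet_Ioi hI2 hI3,
      add_assoc]
  -- piece 3
  have hP3 : ∫ z in Ioi ϑ, Wfn z * F z = 0 := by
    rw [setIntegral_congr_fun measurableSet_Ioi hW3, integral_zero]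
  -- piece 1
  have hP1 : ∫ z in Ioc (0:ℝ) ρ, Wfn z * F z = 1 - G ρ := by
    rw [setIntegral_congr_fun measurableSet_Ioc hW1,
      ← intervalIntegral.integral_of_le h0ρ]
    have := intervalIntegral.integral_eq_sub_of_hasDeriv_right_of_le h0ρ
      (f := fun z => -G z) (f' := F) (hGc.neg.continuousOn)
      (fun z hz => by
        have := (aux_ccdf_deriv a b p hp0 hz.1).neg
        simp only [neg_neg] at this
        exact this.hasDerivWithinAt) (hFint 0 ρ)
    rw [this]
    show -G ρ - -G 0 = 1 - G ρ
    rw [hG0]; ring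
  -- piece 2
  have hprim : ∀ x : ℝ, HasDerivAt (fun z => ∫ u in ρ..z, G u) (G x) x := by
    intro x
    exact intervalIntegral.integral_hasDerivAt_right (hGc.intervalIntegrable ρ x)
      (hGc.stronglyMeasurableAtFilter _ _) hGc.continuousAt
  have hP2 : ∫ z in Ioc ρ ϑ, Wfn z * F z = G ρ - c * ∫ z in ρ..ϑ, G z := by
    rw [setIntegral_congr_fun measurableSet_Ioc hW2,
      ← intervalIntegral.integral_of_le hρϑ.le]
    set H : ℝ → ℝ := fun z => -(L z * G z) - c * ∫ u in ρ..z, G u with hHdef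
    have hHc : ContinuousOn H (Icc ρ ϑ) := by
      apply Continuous.continuousOn
      refine ((hLc.mul hGc).neg).sub (continuous_const.mul ?_)
      exact continuous_iff_continuousAt.mpr fun x => (hprim x).continuousAt
    have hHd : ∀ z ∈ Ioo ρ ϑ, HasDerivWithinAt H (L z * F z) (Ioi z) z := by
      intro z hz
      have hz0 : 0 < z := lt_of_le_of_lt h0ρ hz.1
      have hL : HasDerivAt L (-c) z := by
        have : HasDerivAt (fun z : ℝ => c * (z - θ)) (c * 1) z :=
          ((hasDerivAt_id z).sub_const θ).const_mul c
        simpa using this.const_sub (1/2)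
      have hGd : HasDerivAt G (-(F z)) z := aux_ccdf_deriv a b p hp0 hz0
      have h1 : HasDerivAt (fun z => L z * G z) (-c * G z + L z * -(F z)) z := hL.mul hGd
      have h2 : HasDerivAt (fun z => c * ∫ u in ρ..z, G u) (c * G z) z :=
        (hprim z).const_mul c
      have h3 : HasDerivAt H (-(-c * G z + L z * -(F z)) - c * G z) z := h1.neg.sub h2
      have h4 : -(-c * G z + L z * -(F z)) - c * G z = L z * F z := by ring
      rw [h4] at h3
      exact h3.hasDerivWithinAt
    have := intervalIntegral.integral_eq_sub_of_hasDeriv_right_of_le hρϑ.le hHc hHd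
      (hLFint ρ ϑ)
    rw [this]
    have hLϑ : L ϑ = 0 := by simp only [hLdef]; linarith
    have hLρ : L ρ = 1 := by simp only [hLdef]; linarith
    simp only [hHdef, hLϑ, hLρ, intervalIntegral.integral_same, zero_mul, one_mul,
      neg_zero, mul_zero, zero_sub, sub_zero]
    ring
  rw [hsplit, hP1, hP2, hP3]
  ring

/-- The approximated outage probability is nonincreasing in the reference-link
transmit power `W_s`: for `0 < Ws₁ ≤ Ws₂`,
`∫_0^∞ W(z) f(z|Ws₂) dz ≤ ∫_0^∞ W(z) f(z|Ws₁) dz`, where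
`ζ(Ws) = κπd²(Wp/Ws)^(2/α)` and `ξ(Ws) = ηd^α/Ws`. -/
theorem stmt_15
    (α lam d Wp η κ : ℝ)
    (hα : 2 < α) (hlam : 0 < lam) (hd : 0 < d) (hWp : 0 < Wp) (hη : 0 ≤ η) (hκ : 0 < κ)
    (ζ ξ : ℝ → ℝ)
    (hζ : ∀ Ws > (0:ℝ), ζ Ws = κ * Real.pi * d ^ 2 * (Wp / Ws) ^ (2/α))
    (hξ : ∀ Ws > (0:ℝ), ξ Ws = η * d ^ α / Ws)
    (f : ℝ → ℝ → ℝ)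
    (hf : ∀ Ws > (0:ℝ), ∀ z > (0:ℝ),
      f Ws z = (2 * ζ Ws * lam / α * z ^ (2/α - 1) + ξ Ws) *
        Real.exp (-(ζ Ws * lam * z ^ (2/α)) - ξ Ws * z))
    (n R θ β ϑ ρ : ℝ) (hn : 0 < n) (hR : 0 < R)
    (hθ : θ = 2 ^ R - 1)
    (hβ : β = Real.sqrt (n / (2 * Real.pi)) * (2 ^ (2 * R) - 1) ^ (-(1:ℝ)/2))
    (hϑ : ϑ = θ + Real.sqrt (Real.pi / 2) / β)
    (hρ : ρ = θ - Real.sqrt (Real.pi / 2) / β)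
    (hρ0 : 0 ≤ ρ)
    (Wfn : ℝ → ℝ)
    (hWfn : ∀ t, Wfn t = if t ≤ ρ then 1
      else if t < ϑ then 1/2 - β / Real.sqrt (2 * Real.pi) * (t - θ) else 0) :
    ∀ Ws₁ Ws₂ : ℝ, 0 < Ws₁ → Ws₁ ≤ Ws₂ →
      ∫ z in Set.Ioi (0:ℝ), Wfn z * f Ws₂ z ≤ ∫ z in Set.Ioi (0:ℝ), Wfn z * f Ws₁ z := by
  intro Ws₁ Ws₂ hWs₁ hle
  have hWs₂ : 0 < Ws₂ := lt_of_lt_of_le hWs₁ hle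
  have hπ : 0 < Real.pi := Real.pi_pos
  have hα0 : 0 < α := by linarith
  have hp0 : 0 < 2/α := by positivity
  -- β > 0
  have h2R : (1:ℝ) < (2:ℝ) ^ (2 * R) := by
    rw [Real.one_lt_rpow_iff_of_pos (by norm_num : (0:ℝ) < 2)]
    exact Or.inl ⟨one_lt_two, by linarith⟩
  have hβ0 : 0 < β := by
    rw [hβ]
    exact mul_pos (Real.sqrt_pos.mpr (by positivity))
      (Real.rpow_pos_of_pos (by linarith) _)
  set c := β / Real.sqrt (2 * Real.pi) with hc_def
  have hc : 0 < c := div_pos hβ0 (Real.sqrt_pos.mpr (by positivity))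
  -- the key sqrt identity
  have hq : Real.sqrt (Real.pi / 2) / Real.sqrt (2 * Real.pi) = 1/2 := by
    rw [← Real.sqrt_div (by positivity)]
    have h1 : Real.pi / 2 / (2 * Real.pi) = (1/2 : ℝ)^2 := by
      field_simp
    rw [h1, Real.sqrt_sq (by norm_num)]
  have hhalf : c * (Real.sqrt (Real.pi / 2) / β) = 1/2 := by
    rw [hc_def]
    rw [div_mul_div_comm, mul_comm β _, mul_div_mul_right _ _ (ne_of_gt hβ0)]
    exact hq
  have hρval : c * (ρ - θ) = -(1/2) := by
    rw [hρ]
    have : θ - Real.sqrt (Real.pi / 2) / β - θ = -(Real.sqrt (Real.pi / 2) / β) := by ring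
    rw [this, mul_neg, hhalf]
  have hϑval : c * (ϑ - θ) = 1/2 := by
    rw [hϑ]
    have : θ + Real.sqrt (Real.pi / 2) / β - θ = Real.sqrt (Real.pi / 2) / β := by ring
    rw [this, hhalf]
  have hρϑ : ρ < ϑ := by nlinarith
  -- evaluation for a general Ws
  have key : ∀ Ws : ℝ, 0 < Ws →
      ∫ z in Set.Ioi (0:ℝ), Wfn z * f Ws z
        = 1 - c * ∫ z in ρ..ϑ, Real.exp (-(ζ Ws * lam * z ^ (2/α)) - ξ Ws * z) := by
    intro Ws hWs
    have hζpos : 0 < ζ Ws := by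
      rw [hζ Ws hWs]
      have : (0:ℝ) < (Wp / Ws) ^ (2/α) := Real.rpow_pos_of_pos (by positivity) _
      positivity
    have hξnn : 0 ≤ ξ Ws := by
      rw [hξ Ws hWs]
      have : (0:ℝ) < d ^ α := Real.rpow_pos_of_pos hd _
      positivity
    have heq : ∫ z in Set.Ioi (0:ℝ), Wfn z * f Ws z
        = ∫ z in Set.Ioi (0:ℝ), Wfn z *
            ((ζ Ws * lam * (2/α) * z ^ (2/α - 1) + ξ Ws) *
              Real.exp (-(ζ Ws * lam * z ^ (2/α)) - ξ Ws * z)) := by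
      apply setIntegral_congr_fun measurableSet_Ioi
      intro z hz
      dsimp only
      rw [hf Ws hWs z hz]
      ring
    rw [heq]
    exact aux_outage_eval (2/α) (ζ Ws * lam) (ξ Ws) θ c ρ ϑ hp0
      (by positivity) hξnn hρ0 hc hρval hϑval Wfn hWfn
  rw [key Ws₁ hWs₁, key Ws₂ hWs₂]
  -- monotonicity of the parameters
  have hζmono : ζ Ws₂ ≤ ζ Ws₁ := by
    rw [hζ Ws₁ hWs₁, hζ Ws₂ hWs₂]
    gcongr
  have hξmono : ξ Ws₂ ≤ ξ Ws₁ := by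
    rw [hξ Ws₁ hWs₁, hξ Ws₂ hWs₂]
    have : (0:ℝ) < d ^ α := Real.rpow_pos_of_pos hd _
    gcongr
  -- monotonicity of the integral
  have hJ : (∫ z in ρ..ϑ, Real.exp (-(ζ Ws₁ * lam * z ^ (2/α)) - ξ Ws₁ * z))
      ≤ ∫ z in ρ..ϑ, Real.exp (-(ζ Ws₂ * lam * z ^ (2/α)) - ξ Ws₂ * z) := by
    have hcontp : Continuous fun z : ℝ => z ^ (2/α) := Real.continuous_rpow_const hp0.le
    have hGc : ∀ k b : ℝ, Continuous fun z : ℝ => Real.exp (-(k * z ^ (2/α)) - b * z) := by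
      intro k b
      exact Real.continuous_exp.comp
        (((continuous_const.mul hcontp).neg).sub (continuous_const.mul continuous_id))
    apply intervalIntegral.integral_mono_on hρϑ.le
      ((hGc _ _).intervalIntegrable ρ ϑ) ((hGc _ _).intervalIntegrable ρ ϑ)
    intro z hz
    have hz0 : 0 ≤ z := le_trans hρ0 hz.1
    have hzp : 0 ≤ z ^ (2/α) := Real.rpow_nonneg hz0 _
    apply Real.exp_le_exp.mpr
    nlinarith [mul_le_mul_of_nonneg_right hζmono (mul_nonneg hlam.le hzp),
      mul_le_mul_of_nonneg_right hξmono hz0]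
  nlinarith [mul_le_mul_of_nonneg_left hJ hc.le]
end
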